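/- Löwenheim–Skolem theorem in Herbrand's formulation: A first-order formula A is valid if and only if there is a positive natural number n such that A has Property C of order n. -/

import Mathlib

namespace Herbrand

abbrev FSym := Option (ℕ ⊕ ℕ)

inductive Tm : Type where
  | var : ℕ → Tm
  | fn : FSym → List Tm → Tm

inductive Fm : Type where
  | atom : ℕ → List Tm → Fm
  | neg : Fm → Fm
  | or : Fm → Fm → Fm
  | and : Fm → Fm → Fm
  | all : ℕ → Fm → Fm
  | ex : ℕ → Fm → Fm

mutual
  def Tm.beq : Tm → Tm → Bool
    | .var x, .var y => x == y
    | .fn f ts, .fn g us => f == g && Tm.beqList ts us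
    | _, _ => false
  def Tm.beqList : List Tm → List Tm → Bool
    | [], [] => true
    | t :: ts, u :: us => Tm.beq t u && Tm.beqList ts us
    | _, _ => false
end

def Tm.height : Tm → ℕ
  | .var _ => 1
  | .fn _ ts => 1 + ts.attach.foldr (fun ⟨t, _⟩ m => max (Tm.height t) m) 0

def Tm.varsT : Tm → List ℕ
  | .var x => [x]
  | .fn _ ts => ts.attach.foldr (fun ⟨t, _⟩ l => Tm.varsT t ++ l) []

def Tm.symsT : Tm → List (FSym × ℕ)
  | .var _ => []
  | .fn f ts => (f, ts.length) :: ts.attach.foldr (fun ⟨t, _⟩ l => Tm.symsT t ++ l) []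

def Tm.substT (x : ℕ) (u : Tm) : Tm → Tm
  | .var y => if y = x then u else .var y
  | .fn f ts => .fn f (ts.attach.map fun ⟨t, _⟩ => Tm.substT x u t)

/-- A term is over the base language: no Skolem symbols, no bullet. -/
def Tm.isBaseT (t : Tm) : Prop := ∀ p ∈ t.symsT, ∃ k : ℕ, p.1 = some (Sum.inl k)

def Fm.freeVars : Fm → List ℕ
  | .atom _ ts => ts.flatMap Tm.varsT
  | .neg A => A.freeVars
  | .or A B => A.freeVars ++ B.freeVars
  | .and A B => A.freeVars ++ B.freeVars
  | .all x A => A.freeVars.filter (· ≠ x)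
  | .ex x A => A.freeVars.filter (· ≠ x)

def Fm.boundVars : Fm → List ℕ
  | .atom _ _ => []
  | .neg A => A.boundVars
  | .or A B => A.boundVars ++ B.boundVars
  | .and A B => A.boundVars ++ B.boundVars
  | .all x A => x :: A.boundVars
  | .ex x A => x :: A.boundVars

def Fm.symsF : Fm → List (FSym × ℕ)
  | .atom _ ts => ts.flatMap Tm.symsT
  | .neg A => A.symsF
  | .or A B => A.symsF ++ B.symsF
  | .and A B => A.symsF ++ B.symsF
  | .all _ A => A.symsF
  | .ex _ A => A.symsF

/-- Naive substitution of the term `u` for the free occurrences of the variable `x`. -/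
def Fm.subst (x : ℕ) (u : Tm) : Fm → Fm
  | .atom p ts => .atom p (ts.map (Tm.substT x u))
  | .neg A => .neg (Fm.subst x u A)
  | .or A B => .or (Fm.subst x u A) (Fm.subst x u B)
  | .and A B => .and (Fm.subst x u A) (Fm.subst x u B)
  | .all y A => if y = x then .all y A else .all y (Fm.subst x u A)
  | .ex y A => if y = x then .ex y A else .ex y (Fm.subst x u A)

/-- Quantifier-freeness. -/
def Fm.qf : Fm → Prop
  | .atom _ _ => True
  | .neg A => A.qf
  | .or A B => A.qf ∧ B.qf
  | .and A B => A.qf ∧ B.qf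
  | .all _ _ => False
  | .ex _ _ => False

def Fm.qfB : Fm → Bool
  | .atom _ _ => true
  | .neg A => A.qfB
  | .or A B => A.qfB && B.qfB
  | .and A B => A.qfB && B.qfB
  | .all _ _ => false
  | .ex _ _ => false

/-- A formula is over the base language. -/
def Fm.isBase (A : Fm) : Prop := ∀ p ∈ A.symsF, ∃ k : ℕ, p.1 = some (Sum.inl k)

/-- Rectified: distinct binders, and bound variables distinct from free variables
(the tacit assumption of the paper: every occurrence of every variable is either
free or bound by a unique quantifier). -/
def Fm.rectified (A : Fm) : Prop :=
  A.boundVars.Nodup ∧ ∀ x ∈ A.boundVars, x ∉ A.freeVars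

/-- Sentential (Boolean) evaluation, reading each atomic formula (a predicate symbol
together with its argument terms) as a propositional variable. -/
def Fm.sentEval (β : ℕ → List Tm → Bool) : Fm → Bool
  | .atom p ts => β p ts
  | .neg A => !(A.sentEval β)
  | .or A B => A.sentEval β || B.sentEval β
  | .and A B => A.sentEval β && B.sentEval β
  | .all _ _ => false
  | .ex _ _ => false

/-- A sentential tautology: a quantifier-free formula that evaluates to true under
every Boolean valuation of its atoms. -/
def Fm.taut (A : Fm) : Prop := A.qf ∧ ∀ β : ℕ → List Tm → Bool, A.sentEval β = true

/-- An interpretation of the language on a domain `D`. -/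
structure Interp (D : Type) where
  fns : FSym → List D → D
  prd : ℕ → List D → Prop

def Tm.eval {D : Type} (I : Interp D) (v : ℕ → D) : Tm → D
  | .var x => v x
  | .fn f ts => I.fns f (ts.attach.map fun ⟨t, _⟩ => Tm.eval I v t)

def Fm.holds {D : Type} (I : Interp D) (v : ℕ → D) : Fm → Prop
  | .atom p ts => I.prd p (ts.map (Tm.eval I v))
  | .neg A => ¬ Fm.holds I v A
  | .or A B => Fm.holds I v A ∨ Fm.holds I v B
  | .and A B => Fm.holds I v A ∧ Fm.holds I v B
  | .all x A => ∀ d : D, Fm.holds I (Function.update v x d) A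
  | .ex x A => ∃ d : D, Fm.holds I (Function.update v x d) A

/-- Validity: truth in every structure (nonempty domain) under every assignment. -/
def Fm.valid (A : Fm) : Prop :=
  ∀ (D : Type) (_ : Nonempty D) (I : Interp D) (v : ℕ → D), A.holds I v


/-- Alpha-equivalence: equality of formulas up to renaming of bound variables. -/
inductive Alpha : Fm → Fm → Prop where
  | refl (A : Fm) : Alpha A A
  | symm {A B : Fm} : Alpha A B → Alpha B A
  | trans {A B C : Fm} : Alpha A B → Alpha B C → Alpha A C
  | negc {A B : Fm} : Alpha A B → Alpha (.neg A) (.neg B)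
  | orc {A A' B B' : Fm} : Alpha A A' → Alpha B B' → Alpha (.or A B) (.or A' B')
  | andc {A A' B B' : Fm} : Alpha A A' → Alpha B B' → Alpha (.and A B) (.and A' B')
  | allc {A B : Fm} (x : ℕ) : Alpha A B → Alpha (.all x A) (.all x B)
  | exc {A B : Fm} (x : ℕ) : Alpha A B → Alpha (.ex x A) (.ex x B)
  | allRename (x y : ℕ) (A : Fm) : y ∉ A.freeVars → y ∉ A.boundVars →
      Alpha (.all x A) (.all y (Fm.subst x (.var y) A))
  | exRename (x y : ℕ) (A : Fm) : y ∉ A.freeVars → y ∉ A.boundVars →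
      Alpha (.ex x A) (.ex y (Fm.subst x (.var y) A))

/-- One-hole contexts `A[…]` in formulas. -/
inductive Ctx : Type where
  | hole : Ctx
  | negC : Ctx → Ctx
  | orL : Ctx → Fm → Ctx
  | orR : Fm → Ctx → Ctx
  | andL : Ctx → Fm → Ctx
  | andR : Fm → Ctx → Ctx
  | allC : ℕ → Ctx → Ctx
  | exC : ℕ → Ctx → Ctx

def Ctx.fill : Ctx → Fm → Fm
  | .hole, H => H
  | .negC c, H => .neg (c.fill H)
  | .orL c B, H => .or (c.fill H) B
  | .orR B c, H => .or B (c.fill H)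
  | .andL c B, H => .and (c.fill H) B
  | .andR B c, H => .and B (c.fill H)
  | .allC x c, H => .all x (c.fill H)
  | .exC x c, H => .ex x (c.fill H)

/-- `true` iff the hole is in the scope of an even number of negation symbols. -/
def Ctx.pol : Ctx → Bool
  | .hole => true
  | .negC c => !c.pol
  | .orL c _ => c.pol
  | .orR _ c => c.pol
  | .andL c _ => c.pol
  | .andR _ c => c.pol
  | .allC _ c => c.pol
  | .exC _ c => c.pol

/-- The hole is accessible: not in the scope of any quantifier. -/
def Ctx.accessible : Ctx → Prop
  | .hole => True
  | .negC c => c.accessible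
  | .orL c _ => c.accessible
  | .orR _ c => c.accessible
  | .andL c _ => c.accessible
  | .andR _ c => c.accessible
  | .allC _ _ => False
  | .exC _ _ => False

/-- Variables occurring free in the context (the hole contributing nothing). -/
def Ctx.freeVarsC : Ctx → List ℕ
  | .hole => []
  | .negC c => c.freeVarsC
  | .orL c B => c.freeVarsC ++ B.freeVars
  | .orR B c => B.freeVars ++ c.freeVarsC
  | .andL c B => c.freeVarsC ++ B.freeVars
  | .andR B c => B.freeVars ++ c.freeVarsC
  | .allC x c => c.freeVarsC.filter (· ≠ x)
  | .exC x c => c.freeVarsC.filter (· ≠ x)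

/-- `mkQ q x H` is `∃x.H` if `q = true`, and `∀x.H` if `q = false`.
A quantifier `mkQ q x` sitting in a context `c` is existentialoid iff `q = c.pol`
(i.e. `∃` under an even number of negations or `∀` under an odd number),
and universaloid iff `q = !c.pol`. -/
def mkQ (q : Bool) (x : ℕ) (H : Fm) : Fm := if q then .ex x H else .all x H

/-- Derivations in the modern version of Herbrand's modus-ponens-free calculus,
from a start formula, recording the list of instance terms `t` used by the
applications of the generalized rule of γ-quantification. -/
inductive Deriv : Fm → Fm → List Tm → Prop where
  | refl (A : Fm) : Deriv A A []
  | gamma {B : Fm} {ts : List Tm} (c : Ctx) (q : Bool) (x : ℕ) (t : Tm) (H : Fm) :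
      Deriv B (c.fill (Fm.subst x t H)) ts →
      c.accessible → q = c.pol → (∀ z ∈ t.varsT, z ∉ H.boundVars) →
      Deriv B (c.fill (mkQ q x H)) (ts ++ [t])
  | delta {B : Fm} {ts : List Tm} (c : Ctx) (q : Bool) (y : ℕ) (H : Fm) :
      Deriv B (c.fill H) ts →
      c.accessible → q = !c.pol → y ∉ c.freeVarsC →
      Deriv B (c.fill (mkQ q y H)) ts
  | simp {B : Fm} {ts : List Tm} (c : Ctx) (H H' : Fm) :
      Deriv B (c.fill (if c.pol then Fm.or H H' else Fm.and H H')) ts →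
      Alpha H H' →
      Deriv B (c.fill H) ts
  | alpha {B A A' : Fm} {ts : List Tm} : Deriv B A ts → Alpha A A' → Deriv B A' ts

/-- A single application of a generalized rule of γ- or δ-quantification. -/
inductive QStep : Fm → Fm → Prop where
  | gamma (c : Ctx) (q : Bool) (x : ℕ) (t : Tm) (H : Fm) :
      c.accessible → q = c.pol → (∀ z ∈ t.varsT, z ∉ H.boundVars) →
      QStep (c.fill (Fm.subst x t H)) (c.fill (mkQ q x H))
  | delta (c : Ctx) (q : Bool) (y : ℕ) (H : Fm) :
      c.accessible → q = !c.pol → y ∉ c.freeVarsC →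
      QStep (c.fill H) (c.fill (mkQ q y H))

/-- A single application of the generalized rule of γ-simplification:
simplification where `H` is of the form `Qy.C` with `Qy.` existentialoid. -/
inductive GSimpStep : Fm → Fm → Prop where
  | mk (c : Ctx) (y : ℕ) (C H' : Fm) :
      Alpha (mkQ c.pol y C) H' →
      GSimpStep
        (c.fill (if c.pol then Fm.or (mkQ c.pol y C) H' else Fm.and (mkQ c.pol y C) H'))
        (c.fill (mkQ c.pol y C))


/-- The Skolem term `x*(y₁,…,yₘ)` for the removed universaloid variable `x`,
whose arguments are the variables of the existentialoid quantifiers in scope. -/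
def skTm (x : ℕ) (γs : List ℕ) : Tm := .fn (some (Sum.inr x)) (γs.map Tm.var)

/-- Outer Skolemization: `b` is the polarity (`true` = an even number of negations
so far), `γs` the list of variables of the existentialoid quantifiers in whose
scope we are, in order. Universaloid quantifiers are removed and their variables
replaced by Skolem terms; existentialoid quantifiers are kept. -/
def Fm.skolemize (b : Bool) (γs : List ℕ) : Fm → Fm
  | .atom p ts => .atom p ts
  | .neg A => .neg (A.skolemize (!b) γs)
  | .or A B => .or (A.skolemize b γs) (B.skolemize b γs)
  | .and A B => .and (A.skolemize b γs) (B.skolemize b γs)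
  | .all x A => if b then Fm.subst x (skTm x γs) (A.skolemize b γs)
                else .all x (A.skolemize b (γs ++ [x]))
  | .ex x A => if b then .ex x (A.skolemize b (γs ++ [x]))
               else Fm.subst x (skTm x γs) (A.skolemize b γs)

/-- The outer Skolemized form of a formula. -/
def Fm.outerSk (A : Fm) : Fm := A.skolemize true []

def falsum : Fm := .and (.atom 0 []) (.neg (.atom 0 []))
def verum : Fm := .or (.atom 0 []) (.neg (.atom 0 []))

def bigOr : List Fm → Fm
  | [] => falsum
  | [A] => A
  | A :: B :: rest => .or A (bigOr (B :: rest))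

def bigAnd : List Fm → Fm
  | [] => verum
  | [A] => A
  | A :: B :: rest => .and A (bigAnd (B :: rest))

/-- All lists of length `k` over the given list. -/
def tuples : ℕ → List Tm → List (List Tm)
  | 0, _ => [[]]
  | k + 1, l => l.flatMap fun a => (tuples k l).map (a :: ·)

/-- The fresh constant `•` is included iff `F` contains neither constants
nor free variables. -/
def Fm.allowBullet (F : Fm) : Bool :=
  F.freeVars.isEmpty && F.symsF.all (fun p => p.2 != 0)

/-- The champ fini `T_n(F)`: all terms of height `< n` built from the function
symbols (with their arities), constant symbols, and free variables of `F`
(with the fresh constant `•` added if `F` has neither constants nor free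
variables).  `T_1(F) = ∅`. -/
def Fm.champTm (F : Fm) : ℕ → List Tm
  | 0 => []
  | 1 => []
  | n + 2 =>
      F.freeVars.map Tm.var
        ++ (if F.allowBullet then [Tm.fn none []] else [])
        ++ F.symsF.flatMap (fun p => (tuples p.2 (F.champTm (n + 1))).map (Tm.fn p.1))

/-- The expansion `A^T` of `A` w.r.t. a finite set (list) of terms `T`. -/
def Fm.expandL (T : List Tm) : Fm → Fm
  | .atom p ts => .atom p ts
  | .neg A => .neg (A.expandL T)
  | .or A B => .or (A.expandL T) (B.expandL T)
  | .and A B => .and (A.expandL T) (B.expandL T)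
  | .ex x A => bigOr (T.map fun t => Fm.subst x t (A.expandL T))
  | .all x A => bigAnd (T.map fun t => Fm.subst x t (A.expandL T))

/-- Property C of order `n` (for `n ≥ 1`): letting `F` be the outer Skolemized
form of `A`, for `n = 1` the formula `F` itself must be a sentential tautology,
and for `n > 1` the expansion `F^{T_n(F)}` must be a sentential tautology. -/
def Fm.hasC (A : Fm) (n : ℕ) : Prop :=
  (if n = 1 then A.outerSk else Fm.expandL (A.outerSk.champTm n) A.outerSk).taut


/-- Reading every term that starts with a Skolem function symbol as an atomic
variable, via an injective coding `code` of terms into variable names. -/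
def Tm.readSk (code : Tm → ℕ) : Tm → Tm
  | .var x => .var x
  | .fn (some (Sum.inr k)) ts => .var (code (.fn (some (Sum.inr k)) ts))
  | .fn (some (Sum.inl k)) ts => .fn (some (Sum.inl k)) (ts.attach.map fun ⟨t, _⟩ => Tm.readSk code t)
  | .fn none ts => .fn none (ts.attach.map fun ⟨t, _⟩ => Tm.readSk code t)

def Fm.readSk (code : Tm → ℕ) : Fm → Fm
  | .atom p ts => .atom p (ts.map (Tm.readSk code))
  | .neg A => .neg (A.readSk code)
  | .or A B => .or (A.readSk code) (B.readSk code)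
  | .and A B => .and (A.readSk code) (B.readSk code)
  | .all x A => .all x (A.readSk code)
  | .ex x A => .ex x (A.readSk code)

/-- The atoms (predicate symbol with argument terms) occurring in a formula. -/
def Fm.atoms : Fm → List (ℕ × List Tm)
  | .atom p ts => [(p, ts)]
  | .neg A => A.atoms
  | .or A B => A.atoms ++ B.atoms
  | .and A B => A.atoms ++ B.atoms
  | .all _ A => A.atoms
  | .ex _ A => A.atoms

/-- All Boolean valuations of a finite list of atoms (all other atoms `false`). -/
def valuations : List (ℕ × List Tm) → List (ℕ → List Tm → Bool)
  | [] => [fun _ _ => false]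
  | a :: rest =>
      (valuations rest).flatMap fun β =>
        [fun p ts => if p == a.1 && Tm.beqList ts a.2 then true else β p ts,
         fun p ts => if p == a.1 && Tm.beqList ts a.2 then false else β p ts]

/-- Computable check for sentential tautology. -/
def Fm.tautB (A : Fm) : Bool :=
  A.qfB && (valuations A.atoms).all fun β => A.sentEval β

/-- Computable check for Property C of order `n`. -/
def Fm.hasCB (A : Fm) (n : ℕ) : Bool :=
  (if n = 1 then A.outerSk else Fm.expandL (A.outerSk.champTm n) A.outerSk).tautB

/-- The six rules of passage, read from left to right. -/
inductive PassEq : Fm → Fm → Prop where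
  | p1 (x : ℕ) (A : Fm) : PassEq (.neg (.all x A)) (.ex x (.neg A))
  | p2 (x : ℕ) (A : Fm) : PassEq (.neg (.ex x A)) (.all x (.neg A))
  | p3 (x : ℕ) (A B : Fm) : x ∉ B.freeVars → PassEq (.or (.all x A) B) (.all x (.or A B))
  | p4 (x : ℕ) (A B : Fm) : x ∉ B.freeVars → PassEq (.or B (.all x A)) (.all x (.or B A))
  | p5 (x : ℕ) (A B : Fm) : x ∉ B.freeVars → PassEq (.or (.ex x A) B) (.ex x (.or A B))
  | p6 (x : ℕ) (A B : Fm) : x ∉ B.freeVars → PassEq (.or B (.ex x A)) (.ex x (.or B A))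

/-- A single inference step of Herbrand's historic modus-ponens-free calculus:
the shallow rules of γ- and δ-quantification (empty context), the generalized
(deep) rule of simplification, the twelve (deep) rules of passage, and renaming
of bound variables. -/
inductive HStep : Fm → Fm → Prop where
  | gammaSh (x : ℕ) (t : Tm) (H : Fm) :
      (∀ z ∈ t.varsT, z ∉ H.boundVars) →
      HStep (Fm.subst x t H) (.ex x H)
  | deltaSh (y : ℕ) (H : Fm) :
      HStep H (.all y H)
  | simp (c : Ctx) (H H' : Fm) :
      Alpha H H' →
      HStep (c.fill (if c.pol then Fm.or H H' else Fm.and H H')) (c.fill H)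
  | passage (c : Ctx) (L R : Fm) : PassEq L R → HStep (c.fill L) (c.fill R)
  | passageRev (c : Ctx) (L R : Fm) : PassEq L R → HStep (c.fill R) (c.fill L)
  | alpha (A B : Fm) : Alpha A B → HStep A B


theorem Tm.ind {P : Tm → Prop} (hv : ∀ x, P (.var x))
    (hf : ∀ f ts, (∀ t ∈ ts, P t) → P (.fn f ts)) : ∀ t, P t := by
  intro t
  induction t using Tm.rec (motive_2 := fun l => ∀ t ∈ l, P t) with
  | var x => exact hv x
  | fn f ts ih => exact hf f ts ih
  | nil => rename_i t h; cases h
  | cons h tl ih1 ih2 => rename_i t ht; rcases List.mem_cons.1 ht with rfl | h'; exact ih1; exact ih2 _ h'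


theorem attach_foldr_eq {α β : Type*} (l : List α) (g : α → β → β)
    (F : {x // x ∈ l} → β → β) (h : ∀ p, F p = g p.1) (b : β) :
    l.attach.foldr F b = l.foldr g b := by
  have : F = fun p => g p.1 := funext h
  subst this
  exact List.foldr_attach (l := l) (f := g) (b := b)

theorem attach_map_eq {α β : Type*} (l : List α) (g : α → β)
    (F : {x // x ∈ l} → β) (h : ∀ p, F p = g p.1) :
    l.attach.map F = l.map g := by
  have : F = fun p => g p.1 := funext h
  subst this
  simp

theorem foldr_append_flatMap {α β : Type*} (l : List α) (g : α → List β) :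
    l.foldr (fun t r => g t ++ r) [] = l.flatMap g := by
  induction l with
  | nil => rfl
  | cons a l ih => simp [ih]

@[simp] theorem Tm.varsT_var (x : ℕ) : (Tm.var x).varsT = [x] := by simp [Tm.varsT]
@[simp] theorem Tm.varsT_fn (f : FSym) (ts : List Tm) :
    (Tm.fn f ts).varsT = ts.flatMap Tm.varsT := by
  rw [Tm.varsT, attach_foldr_eq ts (fun t r => t.varsT ++ r) _ (fun ⟨t, ht⟩ => rfl),
    foldr_append_flatMap]

@[simp] theorem Tm.symsT_var (x : ℕ) : (Tm.var x).symsT = [] := by simp [Tm.symsT]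
@[simp] theorem Tm.symsT_fn (f : FSym) (ts : List Tm) :
    (Tm.fn f ts).symsT = (f, ts.length) :: ts.flatMap Tm.symsT := by
  rw [Tm.symsT, attach_foldr_eq ts (fun t r => t.symsT ++ r) _ (fun ⟨t, ht⟩ => rfl),
    foldr_append_flatMap]

@[simp] theorem Tm.substT_var (x : ℕ) (u : Tm) (y : ℕ) :
    Tm.substT x u (.var y) = if y = x then u else .var y := by rw [Tm.substT]
@[simp] theorem Tm.substT_fn (x : ℕ) (u : Tm) (f : FSym) (ts : List Tm) :
    Tm.substT x u (.fn f ts) = .fn f (ts.map (Tm.substT x u)) := by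
  rw [Tm.substT, attach_map_eq ts (Tm.substT x u) _ (fun ⟨t, ht⟩ => rfl)]

@[simp] theorem Tm.eval_var {D : Type} (I : Interp D) (v : ℕ → D) (x : ℕ) :
    Tm.eval I v (.var x) = v x := by rw [Tm.eval]
@[simp] theorem Tm.eval_fn {D : Type} (I : Interp D) (v : ℕ → D) (f : FSym) (ts : List Tm) :
    Tm.eval I v (.fn f ts) = I.fns f (ts.map (Tm.eval I v)) := by
  rw [Tm.eval, attach_map_eq ts (Tm.eval I v) _ (fun ⟨t, ht⟩ => rfl)]

@[simp] theorem Tm.height_var (x : ℕ) : (Tm.var x).height = 1 := by rw [Tm.height]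
theorem Tm.height_fn (f : FSym) (ts : List Tm) :
    (Tm.fn f ts).height = 1 + ts.foldr (fun t m => max t.height m) 0 := by
  rw [Tm.height, attach_foldr_eq ts (fun t m => max t.height m) _ (fun ⟨t, ht⟩ => rfl)]

theorem Tm.eval_congr {D : Type} {I : Interp D} {v w : ℕ → D} {t : Tm}
    (h : ∀ z ∈ t.varsT, v z = w z) : Tm.eval I v t = Tm.eval I w t := by
  induction t using Tm.ind with
  | hv x => simpa using h x (by simp)
  | hf f ts ih =>
    simp only [Tm.eval_fn]
    congr 1
    exact List.map_congr_left fun t ht => ih t ht fun z hz => h z (by simp [Tm.varsT_fn]; exact ⟨t, ht, hz⟩)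

theorem Tm.eval_ext {D : Type} {I J : Interp D} {v : ℕ → D} {t : Tm}
    (h : ∀ p ∈ t.symsT, I.fns p.1 = J.fns p.1) : Tm.eval I v t = Tm.eval J v t := by
  induction t using Tm.ind with
  | hv x => simp
  | hf f ts ih =>
    simp only [Tm.eval_fn]
    rw [h (f, ts.length) (by simp)]
    congr 1
    exact List.map_congr_left fun t ht => ih t ht fun p hp => h p (by simp; right; exact ⟨t, ht, hp⟩)

theorem Tm.substT_id {x : ℕ} {u : Tm} {t : Tm} (h : x ∉ t.varsT) : Tm.substT x u t = t := by
  induction t using Tm.ind with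
  | hv y => simp at h ⊢; omega
  | hf f ts ih =>
    simp at h ⊢
    have : ts.map (Tm.substT x u) = ts.map id :=
      List.map_congr_left fun t ht => ih t ht fun hx => h t ht hx
    simpa using this

theorem Tm.eval_substT {D : Type} (I : Interp D) (v : ℕ → D) (x : ℕ) (u : Tm) (t : Tm) :
    Tm.eval I v (Tm.substT x u t) = Tm.eval I (Function.update v x (Tm.eval I v u)) t := by
  induction t using Tm.ind with
  | hv y =>
    by_cases h : y = x <;> simp [h, Function.update]
  | hf f ts ih =>
    simp only [Tm.substT_fn, Tm.eval_fn, List.map_map]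
    congr 1
    exact List.map_congr_left fun t ht => ih t ht

theorem Tm.substT_comm {x y : ℕ} {u s : Tm} (hxy : x ≠ y) (hyu : y ∉ u.varsT)
    (hxs : x ∉ s.varsT) (t : Tm) :
    Tm.substT x u (Tm.substT y s t) = Tm.substT y s (Tm.substT x u t) := by
  induction t using Tm.ind with
  | hv z =>
    by_cases hz : z = y
    · subst hz
      simp [hxy.symm, Tm.substT_id hxs]
    · by_cases hz' : z = x
      · subst hz'; simp [hz, Tm.substT_id hyu]
      · simp [hz, hz']
  | hf f ts ih =>
    simp only [Tm.substT_fn, List.map_map]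
    congr 1
    exact List.map_congr_left fun t ht => ih t ht

theorem Tm.varsT_substT {x : ℕ} {u : Tm} {t : Tm} :
    ∀ z ∈ (Tm.substT x u t).varsT, (z ∈ t.varsT ∧ z ≠ x) ∨ z ∈ u.varsT := by
  induction t using Tm.ind with
  | hv y =>
    intro z hz
    by_cases h : y = x
    · simp [h] at hz; right; exact hz
    · simp [h] at hz; subst hz; left; simp [h]
  | hf f ts ih =>
    intro z hz
    simp only [Tm.substT_fn, Tm.varsT_fn, List.mem_flatMap, List.mem_map] at hz
    obtain ⟨_, ⟨t', ht', rfl⟩, hz⟩ := hz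
    rcases ih t' ht' z hz with ⟨h1, h2⟩ | h
    · left; refine ⟨by simp [Tm.varsT_fn]; exact ⟨t', ht', h1⟩, h2⟩
    · right; exact h

theorem Tm.symsT_substT {x : ℕ} {u : Tm} {t : Tm} :
    ∀ p ∈ (Tm.substT x u t).symsT, p ∈ t.symsT ∨ p ∈ u.symsT := by
  induction t using Tm.ind with
  | hv y =>
    intro p hp
    by_cases h : y = x
    · simp [h] at hp; right; exact hp
    · simp [h] at hp
  | hf f ts ih =>
    intro p hp
    simp only [Tm.substT_fn, Tm.symsT_fn, List.mem_cons, List.mem_flatMap, List.mem_map] at hp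
    rcases hp with rfl | ⟨_, ⟨t', ht', rfl⟩, hp⟩
    · left; simp
    · rcases ih t' ht' p hp with h | h
      · left; simp; right; exact ⟨t', ht', h⟩
      · right; exact h

@[simp] theorem Fm.holds_atom {D} (I : Interp D) (v) (p ts) :
    (Fm.atom p ts).holds I v ↔ I.prd p (ts.map (Tm.eval I v)) := Iff.rfl
@[simp] theorem Fm.holds_neg {D} (I : Interp D) (v) (A : Fm) :
    (Fm.neg A).holds I v ↔ ¬ A.holds I v := Iff.rfl
@[simp] theorem Fm.holds_or {D} (I : Interp D) (v) (A B : Fm) :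
    (Fm.or A B).holds I v ↔ A.holds I v ∨ B.holds I v := Iff.rfl
@[simp] theorem Fm.holds_and {D} (I : Interp D) (v) (A B : Fm) :
    (Fm.and A B).holds I v ↔ A.holds I v ∧ B.holds I v := Iff.rfl
@[simp] theorem Fm.holds_all {D} (I : Interp D) (v) (x) (A : Fm) :
    (Fm.all x A).holds I v ↔ ∀ d, A.holds I (Function.update v x d) := Iff.rfl
@[simp] theorem Fm.holds_ex {D} (I : Interp D) (v) (x) (A : Fm) :
    (Fm.ex x A).holds I v ↔ ∃ d, A.holds I (Function.update v x d) := Iff.rfl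

theorem Fm.holds_congr {D} {I : Interp D} {C : Fm} :
    ∀ {v w : ℕ → D}, (∀ z ∈ C.freeVars, v z = w z) → (C.holds I v ↔ C.holds I w) := by
  induction C with
  | atom p ts =>
    intro v w h
    simp only [Fm.holds_atom]
    have : ts.map (Tm.eval I v) = ts.map (Tm.eval I w) :=
      List.map_congr_left fun t ht => Tm.eval_congr fun z hz => h z (by
        simp [Fm.freeVars]; exact ⟨t, ht, hz⟩)
    rw [this]
  | neg A ih => intro v w h; simp only [Fm.holds_neg]; rw [ih h]
  | or A B ihA ihB =>
    intro v w h
    simp only [Fm.holds_or]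
    rw [ihA fun z hz => h z (by simp [Fm.freeVars, hz]),
        ihB fun z hz => h z (by simp [Fm.freeVars, hz])]
  | and A B ihA ihB =>
    intro v w h
    simp only [Fm.holds_and]
    rw [ihA fun z hz => h z (by simp [Fm.freeVars, hz]),
        ihB fun z hz => h z (by simp [Fm.freeVars, hz])]
  | all x A ih =>
    intro v w h
    simp only [Fm.holds_all]
    refine forall_congr' fun d => ih fun z hz => ?_
    by_cases hzx : z = x
    · simp [hzx, Function.update]
    · simp only [Function.update, dif_neg hzx]
      exact h z (by simp [Fm.freeVars, List.mem_filter, hz, hzx])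
  | ex x A ih =>
    intro v w h
    simp only [Fm.holds_ex]
    refine exists_congr fun d => ih fun z hz => ?_
    by_cases hzx : z = x
    · simp [hzx, Function.update]
    · simp only [Function.update, dif_neg hzx]
      exact h z (by simp [Fm.freeVars, List.mem_filter, hz, hzx])

theorem Fm.holds_ext {D} {I J : Interp D} (hprd : I.prd = J.prd) {C : Fm}
    (hfns : ∀ p ∈ C.symsF, I.fns p.1 = J.fns p.1) :
    ∀ {v : ℕ → D}, C.holds I v ↔ C.holds J v := by
  induction C with
  | atom p ts =>
    intro v
    simp only [Fm.holds_atom, hprd]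
    have : ts.map (Tm.eval I v) = ts.map (Tm.eval J v) :=
      List.map_congr_left fun t ht => Tm.eval_ext fun q hq => hfns q (by
        simp [Fm.symsF]; exact ⟨t, ht, hq⟩)
    rw [this]
  | neg A ih => intro v; simp only [Fm.holds_neg]; rw [ih hfns]
  | or A B ihA ihB =>
    intro v
    simp only [Fm.holds_or]
    rw [ihA fun q hq => hfns q (by simp [Fm.symsF, hq]),
        ihB fun q hq => hfns q (by simp [Fm.symsF, hq])]
  | and A B ihA ihB =>
    intro v
    simp only [Fm.holds_and]
    rw [ihA fun q hq => hfns q (by simp [Fm.symsF, hq]),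
        ihB fun q hq => hfns q (by simp [Fm.symsF, hq])]
  | all x A ih =>
    intro v
    exact forall_congr' fun d => ih fun q hq => hfns q (by simpa [Fm.symsF] using hq)
  | ex x A ih =>
    intro v
    exact exists_congr fun d => ih fun q hq => hfns q (by simpa [Fm.symsF] using hq)

@[simp] theorem Fm.boundVars_subst (x : ℕ) (u : Tm) (C : Fm) :
    (Fm.subst x u C).boundVars = C.boundVars := by
  induction C with
  | atom p ts => simp [Fm.subst, Fm.boundVars]
  | neg A ih => simp [Fm.subst, Fm.boundVars, ih]
  | or A B ihA ihB => simp [Fm.subst, Fm.boundVars, ihA, ihB]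
  | and A B ihA ihB => simp [Fm.subst, Fm.boundVars, ihA, ihB]
  | all y A ih =>
    by_cases h : y = x <;> simp [Fm.subst, h, Fm.boundVars, ih]
  | ex y A ih =>
    by_cases h : y = x <;> simp [Fm.subst, h, Fm.boundVars, ih]

theorem Fm.freeVars_subst {x : ℕ} {u : Tm} {C : Fm} :
    ∀ z ∈ (Fm.subst x u C).freeVars, (z ∈ C.freeVars ∧ z ≠ x) ∨ z ∈ u.varsT := by
  induction C with
  | atom p ts =>
    intro z hz
    simp only [Fm.subst, Fm.freeVars, List.mem_flatMap, List.mem_map] at hz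
    obtain ⟨_, ⟨t, ht, rfl⟩, hz⟩ := hz
    rcases Tm.varsT_substT z hz with ⟨h1, h2⟩ | h
    · left; exact ⟨by simp [Fm.freeVars]; exact ⟨t, ht, h1⟩, h2⟩
    · right; exact h
  | neg A ih => exact ih
  | or A B ihA ihB =>
    intro z hz
    simp only [Fm.subst, Fm.freeVars, List.mem_append] at hz ⊢
    rcases hz with h | h
    · rcases ihA z h with ⟨h1, h2⟩ | h' ; exacts [Or.inl ⟨Or.inl h1, h2⟩, Or.inr h']
    · rcases ihB z h with ⟨h1, h2⟩ | h' ; exacts [Or.inl ⟨Or.inr h1, h2⟩, Or.inr h']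
  | and A B ihA ihB =>
    intro z hz
    simp only [Fm.subst, Fm.freeVars, List.mem_append] at hz ⊢
    rcases hz with h | h
    · rcases ihA z h with ⟨h1, h2⟩ | h' ; exacts [Or.inl ⟨Or.inl h1, h2⟩, Or.inr h']
    · rcases ihB z h with ⟨h1, h2⟩ | h' ; exacts [Or.inl ⟨Or.inr h1, h2⟩, Or.inr h']
  | all y A ih =>
    intro z hz
    by_cases h : y = x
    · simp only [Fm.subst, if_pos h] at hz
      subst h
      simp only [Fm.freeVars, List.mem_filter, decide_eq_true_eq] at hz
      left
      refine ⟨by simp [Fm.freeVars, List.mem_filter, hz.1, hz.2], ?_⟩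
      intro hzx; exact hz.2 (hzx ▸ rfl)
    · simp only [Fm.subst, if_neg h, Fm.freeVars, List.mem_filter, decide_eq_true_eq] at hz
      rcases ih z hz.1 with ⟨h1, h2⟩ | h'
      · left; exact ⟨by simp [Fm.freeVars, List.mem_filter, h1, hz.2], h2⟩
      · right; exact h'
  | ex y A ih =>
    intro z hz
    by_cases h : y = x
    · simp only [Fm.subst, if_pos h] at hz
      subst h
      simp only [Fm.freeVars, List.mem_filter, decide_eq_true_eq] at hz
      left
      refine ⟨by simp [Fm.freeVars, List.mem_filter, hz.1, hz.2], ?_⟩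
      intro hzx; exact hz.2 (hzx ▸ rfl)
    · simp only [Fm.subst, if_neg h, Fm.freeVars, List.mem_filter, decide_eq_true_eq] at hz
      rcases ih z hz.1 with ⟨h1, h2⟩ | h'
      · left; exact ⟨by simp [Fm.freeVars, List.mem_filter, h1, hz.2], h2⟩
      · right; exact h'

theorem Fm.symsF_subst {x : ℕ} {u : Tm} {C : Fm} :
    ∀ p ∈ (Fm.subst x u C).symsF, p ∈ C.symsF ∨ p ∈ u.symsT := by
  induction C with
  | atom q ts =>
    intro p hp
    simp only [Fm.subst, Fm.symsF, List.mem_flatMap, List.mem_map] at hp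
    obtain ⟨_, ⟨t, ht, rfl⟩, hp⟩ := hp
    rcases Tm.symsT_substT p hp with h | h
    · left; simp [Fm.symsF]; exact ⟨t, ht, h⟩
    · right; exact h
  | neg A ih => exact ih
  | or A B ihA ihB =>
    intro p hp
    simp only [Fm.subst, Fm.symsF, List.mem_append] at hp ⊢
    rcases hp with h | h
    · rcases ihA p h with h' | h'; exacts [Or.inl (Or.inl h'), Or.inr h']
    · rcases ihB p h with h' | h'; exacts [Or.inl (Or.inr h'), Or.inr h']
  | and A B ihA ihB =>
    intro p hp
    simp only [Fm.subst, Fm.symsF, List.mem_append] at hp ⊢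
    rcases hp with h | h
    · rcases ihA p h with h' | h'; exacts [Or.inl (Or.inl h'), Or.inr h']
    · rcases ihB p h with h' | h'; exacts [Or.inl (Or.inr h'), Or.inr h']
  | all y A ih =>
    intro p hp
    by_cases h : y = x
    · simp only [Fm.subst, if_pos h, Fm.symsF] at hp; left; exact hp
    · simp only [Fm.subst, if_neg h, Fm.symsF] at hp; exact ih p hp
  | ex y A ih =>
    intro p hp
    by_cases h : y = x
    · simp only [Fm.subst, if_pos h, Fm.symsF] at hp; left; exact hp
    · simp only [Fm.subst, if_neg h, Fm.symsF] at hp; exact ih p hp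

theorem Fm.subst_comm {x y : ℕ} {u s : Tm} (hxy : x ≠ y) (hyu : y ∉ u.varsT)
    (hxs : x ∉ s.varsT) (C : Fm) :
    Fm.subst x u (Fm.subst y s C) = Fm.subst y s (Fm.subst x u C) := by
  induction C with
  | atom p ts =>
    simp only [Fm.subst, List.map_map]
    congr 1
    exact List.map_congr_left fun t _ => Tm.substT_comm hxy hyu hxs t
  | neg A ih => simp only [Fm.subst, ih]
  | or A B ihA ihB => simp only [Fm.subst, ihA, ihB]
  | and A B ihA ihB => simp only [Fm.subst, ihA, ihB]
  | all z A ih =>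
    by_cases hzy : z = y <;> by_cases hzx : z = x <;>
      simp_all [Fm.subst, hzy, hzx]
  | ex z A ih =>
    by_cases hzy : z = y <;> by_cases hzx : z = x <;>
      simp_all [Fm.subst, hzy, hzx]

/-- The central substitution lemma. -/
theorem Fm.holds_subst {D} {I : Interp D} {x : ℕ} {t : Tm} {C : Fm}
    (hx : x ∉ C.boundVars) (ht : ∀ z ∈ t.varsT, z ∉ C.boundVars) :
    ∀ {v : ℕ → D}, (Fm.subst x t C).holds I v ↔
      C.holds I (Function.update v x (Tm.eval I v t)) := by
  induction C with
  | atom p ts =>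
    intro v
    simp only [Fm.subst, Fm.holds_atom, List.map_map]
    have : ts.map (Tm.eval I v ∘ Tm.substT x t) =
        ts.map (Tm.eval I (Function.update v x (Tm.eval I v t))) :=
      List.map_congr_left fun s _ => Tm.eval_substT I v x t s
    rw [this]
  | neg A ih => intro v; simp only [Fm.subst, Fm.holds_neg]; rw [ih hx ht]
  | or A B ihA ihB =>
    intro v
    simp only [Fm.boundVars, List.mem_append] at hx ht
    simp only [Fm.subst, Fm.holds_or]
    rw [ihA (fun h => hx (Or.inl h)) (fun z hz h => ht z hz (Or.inl h)),
        ihB (fun h => hx (Or.inr h)) (fun z hz h => ht z hz (Or.inr h))]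
  | and A B ihA ihB =>
    intro v
    simp only [Fm.boundVars, List.mem_append] at hx ht
    simp only [Fm.subst, Fm.holds_and]
    rw [ihA (fun h => hx (Or.inl h)) (fun z hz h => ht z hz (Or.inl h)),
        ihB (fun h => hx (Or.inr h)) (fun z hz h => ht z hz (Or.inr h))]
  | all y A ih =>
    intro v
    simp only [Fm.boundVars, List.mem_cons] at hx ht
    have hyx : ¬ (y = x) := fun h => hx (Or.inl h.symm)
    simp only [Fm.subst, if_neg hyx, Fm.holds_all]
    refine forall_congr' fun d => ?_
    rw [ih (fun h => hx (Or.inr h)) (fun z hz h => ht z hz (Or.inr h))]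
    have hev : Tm.eval I (Function.update v y d) t = Tm.eval I v t :=
      Tm.eval_congr fun z hz => by
        have : ¬ (z = y) := fun h => ht z hz (Or.inl h)
        simp [Function.update, this]
    rw [hev, Function.update_comm (fun h => hyx h.symm)]
  | ex y A ih =>
    intro v
    simp only [Fm.boundVars, List.mem_cons] at hx ht
    have hyx : ¬ (y = x) := fun h => hx (Or.inl h.symm)
    simp only [Fm.subst, if_neg hyx, Fm.holds_ex]
    refine exists_congr fun d => ?_
    rw [ih (fun h => hx (Or.inr h)) (fun z hz h => ht z hz (Or.inr h))]
    have hev : Tm.eval I (Function.update v y d) t = Tm.eval I v t :=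
      Tm.eval_congr fun z hz => by
        have : ¬ (z = y) := fun h => ht z hz (Or.inl h)
        simp [Function.update, this]
    rw [hev, Function.update_comm (fun h => hyx h.symm)]

@[simp] theorem Fm.sentEval_atom (β) (p ts) : (Fm.atom p ts).sentEval β = β p ts := rfl
@[simp] theorem Fm.sentEval_neg (β) (A : Fm) :
    (Fm.neg A).sentEval β = !(A.sentEval β) := rfl
@[simp] theorem Fm.sentEval_or (β) (A B : Fm) :
    (Fm.or A B).sentEval β = (A.sentEval β || B.sentEval β) := rfl
@[simp] theorem Fm.sentEval_and (β) (A B : Fm) :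
    (Fm.and A B).sentEval β = (A.sentEval β && B.sentEval β) := rfl

@[simp] theorem Fm.qf_atom (p ts) : (Fm.atom p ts).qf := trivial
@[simp] theorem Fm.qf_neg (A : Fm) : (Fm.neg A).qf ↔ A.qf := Iff.rfl
@[simp] theorem Fm.qf_or (A B : Fm) : (Fm.or A B).qf ↔ A.qf ∧ B.qf := Iff.rfl
@[simp] theorem Fm.qf_and (A B : Fm) : (Fm.and A B).qf ↔ A.qf ∧ B.qf := Iff.rfl
@[simp] theorem Fm.qf_all (x) (A : Fm) : ¬ (Fm.all x A).qf := fun h => h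
@[simp] theorem Fm.qf_ex (x) (A : Fm) : ¬ (Fm.ex x A).qf := fun h => h

theorem Fm.qf_subst {x : ℕ} {u : Tm} {C : Fm} (h : C.qf) : (Fm.subst x u C).qf := by
  induction C with
  | atom p ts => trivial
  | neg A ih => exact ih h
  | or A B ihA ihB => exact ⟨ihA h.1, ihB h.2⟩
  | and A B ihA ihB => exact ⟨ihA h.1, ihB h.2⟩
  | all y A ih => exact absurd h (by simp)
  | ex y A ih => exact absurd h (by simp)

theorem Fm.boundVars_of_qf {C : Fm} (h : C.qf) : C.boundVars = [] := by
  induction C with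
  | atom p ts => rfl
  | neg A ih => exact ih h
  | or A B ihA ihB => simp [Fm.boundVars, ihA h.1, ihB h.2]
  | and A B ihA ihB => simp [Fm.boundVars, ihA h.1, ihB h.2]
  | all y A ih => exact absurd h (by simp)
  | ex y A ih => exact absurd h (by simp)

theorem Fm.qf_falsum : falsum.qf := ⟨trivial, trivial⟩
theorem Fm.qf_verum : verum.qf := ⟨trivial, trivial⟩
@[simp] theorem Fm.holds_falsum {D} (I : Interp D) (v) : ¬ falsum.holds I v := by
  intro h; exact h.2 h.1
@[simp] theorem Fm.holds_verum {D} (I : Interp D) (v) : verum.holds I v := by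
  by_cases h : (Fm.atom 0 []).holds I v
  · exact Or.inl h
  · exact Or.inr h

theorem Fm.qf_bigOr {l : List Fm} (h : ∀ G ∈ l, G.qf) : (bigOr l).qf := by
  induction l with
  | nil => exact Fm.qf_falsum
  | cons A l ih =>
    cases l with
    | nil => exact h A (by simp)
    | cons B r =>
      exact ⟨h A (by simp), ih fun G hG => h G (List.mem_cons_of_mem _ hG)⟩

theorem Fm.qf_bigAnd {l : List Fm} (h : ∀ G ∈ l, G.qf) : (bigAnd l).qf := by
  induction l with
  | nil => exact Fm.qf_verum
  | cons A l ih =>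
    cases l with
    | nil => exact h A (by simp)
    | cons B r =>
      exact ⟨h A (by simp), ih fun G hG => h G (List.mem_cons_of_mem _ hG)⟩

theorem Fm.holds_bigOr {D} {I : Interp D} {v} {l : List Fm} :
    (bigOr l).holds I v ↔ ∃ G ∈ l, G.holds I v := by
  induction l with
  | nil => simp [bigOr]
  | cons A l ih =>
    cases l with
    | nil => simp [bigOr]
    | cons B r =>
      rw [bigOr]
      simp only [Fm.holds_or, ih]
      constructor
      · rintro (h | ⟨G, hG, h⟩)
        · exact ⟨A, by simp, h⟩
        · exact ⟨G, List.mem_cons_of_mem _ hG, h⟩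
      · rintro ⟨G, hG, h⟩
        rcases List.mem_cons.1 hG with rfl | hG'
        · exact Or.inl h
        · exact Or.inr ⟨G, hG', h⟩

theorem Fm.holds_bigAnd {D} {I : Interp D} {v} {l : List Fm} :
    (bigAnd l).holds I v ↔ ∀ G ∈ l, G.holds I v := by
  induction l with
  | nil => simp [bigAnd]
  | cons A l ih =>
    cases l with
    | nil => simp [bigAnd]
    | cons B r =>
      rw [bigAnd]
      simp only [Fm.holds_and, ih]
      constructor
      · rintro ⟨hA, h⟩ G hG
        rcases List.mem_cons.1 hG with rfl | hG'
        · exact hA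
        · exact h G hG'
      · intro h
        exact ⟨h A (by simp), fun G hG => h G (List.mem_cons_of_mem _ hG)⟩

theorem Fm.qf_expandL {T : List Tm} {C : Fm} : (C.expandL T).qf := by
  induction C with
  | atom p ts => trivial
  | neg A ih => exact ih
  | or A B ihA ihB => exact ⟨ihA, ihB⟩
  | and A B ihA ihB => exact ⟨ihA, ihB⟩
  | all x A ih =>
    exact Fm.qf_bigAnd (by rintro G hG; simp only [List.mem_map] at hG
                           obtain ⟨t, _, rfl⟩ := hG; exact Fm.qf_subst ih)
  | ex x A ih =>
    exact Fm.qf_bigOr (by rintro G hG; simp only [List.mem_map] at hG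
                          obtain ⟨t, _, rfl⟩ := hG; exact Fm.qf_subst ih)

open Classical in
/-- The Boolean valuation induced by a structure and an assignment. -/
noncomputable def betaOf {D : Type} (I : Interp D) (v : ℕ → D) : ℕ → List Tm → Bool :=
  fun p ts => if I.prd p (ts.map (Tm.eval I v)) then true else false

theorem Fm.sentEval_betaOf {D} {I : Interp D} {v : ℕ → D} {C : Fm} (h : C.qf) :
    C.sentEval (betaOf I v) = true ↔ C.holds I v := by
  induction C with
  | atom p ts =>
    simp only [Fm.sentEval_atom, betaOf, Fm.holds_atom]
    by_cases hp : I.prd p (ts.map (Tm.eval I v)) <;> simp [hp]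
  | neg A ih => simp only [Fm.sentEval_neg, Bool.not_eq_true', Fm.holds_neg]
                rw [← ih h]; simp
  | or A B ihA ihB =>
    simp only [Fm.sentEval_or, Bool.or_eq_true, Fm.holds_or, ihA h.1, ihB h.2]
  | and A B ihA ihB =>
    simp only [Fm.sentEval_and, Bool.and_eq_true, Fm.holds_and, ihA h.1, ihB h.2]
  | all x A ih => exact absurd h (by simp)
  | ex x A ih => exact absurd h (by simp)

theorem Fm.sentEval_congr {β β' : ℕ → List Tm → Bool} {C : Fm}
    (h : ∀ a ∈ C.atoms, β a.1 a.2 = β' a.1 a.2) : C.sentEval β = C.sentEval β' := by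
  induction C with
  | atom p ts => exact h (p, ts) (by simp [Fm.atoms])
  | neg A ih => simp only [Fm.sentEval_neg]; rw [ih h]
  | or A B ihA ihB =>
    simp only [Fm.sentEval_or]
    rw [ihA fun a ha => h a (by simp [Fm.atoms, ha]),
        ihB fun a ha => h a (by simp [Fm.atoms, ha])]
  | and A B ihA ihB =>
    simp only [Fm.sentEval_and]
    rw [ihA fun a ha => h a (by simp [Fm.atoms, ha]),
        ihB fun a ha => h a (by simp [Fm.atoms, ha])]
  | all x A ih => rfl
  | ex x A ih => rfl

/-- A sentential tautology holds in every structure. -/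
theorem Fm.taut_holds {C : Fm} (h : C.taut) {D} (I : Interp D) (v : ℕ → D) :
    C.holds I v := by
  exact (Fm.sentEval_betaOf h.1).1 (h.2 _)

@[simp] theorem Fm.skolemize_atom (b γs p ts) :
    (Fm.atom p ts).skolemize b γs = .atom p ts := by rw [Fm.skolemize]
@[simp] theorem Fm.skolemize_neg (b γs) (A : Fm) :
    (Fm.neg A).skolemize b γs = .neg (A.skolemize (!b) γs) := by rw [Fm.skolemize]
@[simp] theorem Fm.skolemize_or (b γs) (A B : Fm) :
    (Fm.or A B).skolemize b γs = .or (A.skolemize b γs) (B.skolemize b γs) := by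
  rw [Fm.skolemize]
@[simp] theorem Fm.skolemize_and (b γs) (A B : Fm) :
    (Fm.and A B).skolemize b γs = .and (A.skolemize b γs) (B.skolemize b γs) := by
  rw [Fm.skolemize]
theorem Fm.skolemize_all (b γs x) (A : Fm) :
    (Fm.all x A).skolemize b γs = if b then Fm.subst x (skTm x γs) (A.skolemize b γs)
      else .all x (A.skolemize b (γs ++ [x])) := by rw [Fm.skolemize]
theorem Fm.skolemize_ex (b γs x) (A : Fm) :
    (Fm.ex x A).skolemize b γs = if b then .ex x (A.skolemize b (γs ++ [x]))
      else Fm.subst x (skTm x γs) (A.skolemize b γs) := by rw [Fm.skolemize]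

@[simp] theorem skTm_varsT (x : ℕ) (γs : List ℕ) : (skTm x γs).varsT = γs := by
  simp only [skTm, Tm.varsT_fn]
  induction γs with
  | nil => rfl
  | cons a l ih => simp [ih]

theorem Fm.boundVars_skolemize (b γs) (C : Fm) :
    (C.skolemize b γs).boundVars.Sublist C.boundVars := by
  induction C generalizing b γs with
  | atom p ts => simp
  | neg A ih => simpa [Fm.boundVars] using ih (!b) γs
  | or A B ihA ihB =>
    simpa [Fm.boundVars] using List.Sublist.append (ihA b γs) (ihB b γs)
  | and A B ihA ihB =>
    simpa [Fm.boundVars] using List.Sublist.append (ihA b γs) (ihB b γs)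
  | all x A ih =>
    rw [Fm.skolemize_all]
    by_cases hb : b
    · simp only [if_pos hb, Fm.boundVars_subst, Fm.boundVars]
      exact (ih b γs).trans (List.sublist_cons_self _ _)
    · simp only [if_neg hb, Fm.boundVars]
      exact List.Sublist.cons₂ _ (ih b (γs ++ [x]))
  | ex x A ih =>
    rw [Fm.skolemize_ex]
    by_cases hb : b
    · simp only [if_pos hb, Fm.boundVars]
      exact List.Sublist.cons₂ _ (ih b (γs ++ [x]))
    · simp only [if_neg hb, Fm.boundVars_subst, Fm.boundVars]
      exact (ih b γs).trans (List.sublist_cons_self _ _)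

theorem Fm.freeVars_skolemize {b γs} {C : Fm} :
    ∀ z ∈ (C.skolemize b γs).freeVars, z ∈ C.freeVars ∨ z ∈ γs := by
  induction C generalizing b γs with
  | atom p ts => intro z hz; left; simpa using hz
  | neg A ih => exact fun z hz => ih z hz
  | or A B ihA ihB =>
    intro z hz
    simp only [Fm.skolemize_or, Fm.freeVars, List.mem_append] at hz ⊢
    rcases hz with h | h
    · rcases ihA z h with h' | h'; exacts [Or.inl (Or.inl h'), Or.inr h']
    · rcases ihB z h with h' | h'; exacts [Or.inl (Or.inr h'), Or.inr h']
  | and A B ihA ihB =>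
    intro z hz
    simp only [Fm.skolemize_and, Fm.freeVars, List.mem_append] at hz ⊢
    rcases hz with h | h
    · rcases ihA z h with h' | h'; exacts [Or.inl (Or.inl h'), Or.inr h']
    · rcases ihB z h with h' | h'; exacts [Or.inl (Or.inr h'), Or.inr h']
  | all x A ih =>
    intro z hz
    rw [Fm.skolemize_all] at hz
    by_cases hb : b
    · rw [if_pos hb] at hz
      rcases Fm.freeVars_subst z hz with ⟨h1, h2⟩ | h
      · rcases ih z h1 with h' | h'
        · left; simp [Fm.freeVars, List.mem_filter, h', h2]
        · right; exact h'
      · right; simpa using h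
    · rw [if_neg hb] at hz
      simp only [Fm.freeVars, List.mem_filter, decide_eq_true_eq] at hz
      rcases ih z hz.1 with h' | h'
      · left; simp [Fm.freeVars, List.mem_filter, h', hz.2]
      · rcases List.mem_append.1 h' with h'' | h''
        · right; exact h''
        · exfalso; exact hz.2 (by simpa using h'')
  | ex x A ih =>
    intro z hz
    rw [Fm.skolemize_ex] at hz
    by_cases hb : b
    · rw [if_pos hb] at hz
      simp only [Fm.freeVars, List.mem_filter, decide_eq_true_eq] at hz
      rcases ih z hz.1 with h' | h'
      · left; simp [Fm.freeVars, List.mem_filter, h', hz.2]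
      · rcases List.mem_append.1 h' with h'' | h''
        · right; exact h''
        · exfalso; exact hz.2 (by simpa using h'')
    · rw [if_neg hb] at hz
      rcases Fm.freeVars_subst z hz with ⟨h1, h2⟩ | h
      · rcases ih z h1 with h' | h'
        · left; simp [Fm.freeVars, List.mem_filter, h', h2]
        · right; exact h'
      · right; simpa using h

/-- Only existentialoid quantifiers, w.r.t. the ambient polarity `b`. -/
def Fm.exOnly : Fm → Bool → Prop
  | .atom _ _, _ => True
  | .neg A, b => A.exOnly (!b)
  | .or A B, b => A.exOnly b ∧ B.exOnly b
  | .and A B, b => A.exOnly b ∧ B.exOnly b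
  | .all _ A, b => b = false ∧ A.exOnly false
  | .ex _ A, b => b = true ∧ A.exOnly true

theorem Fm.exOnly_subst {x u} {C : Fm} {b} (h : C.exOnly b) :
    (Fm.subst x u C).exOnly b := by
  induction C generalizing b with
  | atom p ts => trivial
  | neg A ih => exact ih h
  | or A B ihA ihB => exact ⟨ihA h.1, ihB h.2⟩
  | and A B ihA ihB => exact ⟨ihA h.1, ihB h.2⟩
  | all y A ih =>
    rw [Fm.subst]
    by_cases hy : y = x
    · rw [if_pos hy]; exact h
    · rw [if_neg hy]; exact ⟨h.1, ih h.2⟩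
  | ex y A ih =>
    rw [Fm.subst]
    by_cases hy : y = x
    · rw [if_pos hy]; exact h
    · rw [if_neg hy]; exact ⟨h.1, ih h.2⟩

theorem Fm.exOnly_skolemize (C : Fm) (b γs) : (C.skolemize b γs).exOnly b := by
  induction C generalizing b γs with
  | atom p ts => trivial
  | neg A ih => exact ih (!b) γs
  | or A B ihA ihB => exact ⟨ihA b γs, ihB b γs⟩
  | and A B ihA ihB => exact ⟨ihA b γs, ihB b γs⟩
  | all x A ih =>
    rw [Fm.skolemize_all]
    cases b with
    | true => simpa using Fm.exOnly_subst (ih true γs)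
    | false => simpa [Fm.exOnly] using ih false (γs ++ [x])
  | ex x A ih =>
    rw [Fm.skolemize_ex]
    cases b with
    | true => simpa [Fm.exOnly] using ih true (γs ++ [x])
    | false => simpa using Fm.exOnly_subst (ih false γs)

/-- Pointwise monotonicity of outer Skolemization: in any structure (interpreting
the Skolem symbols somehow), `A` implies its outer Skolemized form. -/
theorem Fm.holds_skolemize {D} {I : Interp D} {C : Fm} :
    ∀ (b : Bool) (γs : List ℕ), C.boundVars.Nodup →
      (∀ z ∈ γs, z ∉ C.boundVars) → ∀ v : ℕ → D,
      (b = true → C.holds I v → (C.skolemize b γs).holds I v) ∧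
      (b = false → (C.skolemize b γs).holds I v → C.holds I v) := by
  induction C with
  | atom p ts => intro b γs _ _ v; constructor <;> intro _ h <;> simpa using h
  | neg A ih =>
    intro b γs h1 h2 v
    constructor
    · rintro rfl h
      simp only [Fm.skolemize_neg, Fm.holds_neg] at *
      exact fun hh => h ((ih false γs h1 h2 v).2 rfl hh)
    · rintro rfl h
      simp only [Fm.skolemize_neg, Fm.holds_neg] at *
      exact fun hh => h ((ih true γs h1 h2 v).1 rfl hh)
  | or A B ihA ihB =>
    intro b γs h1 h2 v
    simp only [Fm.boundVars, List.nodup_append] at h1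
    have h2A : ∀ z ∈ γs, z ∉ A.boundVars := fun z hz h =>
      h2 z hz (by simp [Fm.boundVars, h])
    have h2B : ∀ z ∈ γs, z ∉ B.boundVars := fun z hz h =>
      h2 z hz (by simp [Fm.boundVars, h])
    constructor
    · rintro rfl h
      simp only [Fm.skolemize_or, Fm.holds_or] at *
      rcases h with h | h
      · exact Or.inl ((ihA true γs h1.1 h2A v).1 rfl h)
      · exact Or.inr ((ihB true γs h1.2.1 h2B v).1 rfl h)
    · rintro rfl h
      simp only [Fm.skolemize_or, Fm.holds_or] at *
      rcases h with h | h
      · exact Or.inl ((ihA false γs h1.1 h2A v).2 rfl h)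
      · exact Or.inr ((ihB false γs h1.2.1 h2B v).2 rfl h)
  | and A B ihA ihB =>
    intro b γs h1 h2 v
    simp only [Fm.boundVars, List.nodup_append] at h1
    have h2A : ∀ z ∈ γs, z ∉ A.boundVars := fun z hz h =>
      h2 z hz (by simp [Fm.boundVars, h])
    have h2B : ∀ z ∈ γs, z ∉ B.boundVars := fun z hz h =>
      h2 z hz (by simp [Fm.boundVars, h])
    constructor
    · rintro rfl h
      simp only [Fm.skolemize_and, Fm.holds_and] at *
      exact ⟨(ihA true γs h1.1 h2A v).1 rfl h.1, (ihB true γs h1.2.1 h2B v).1 rfl h.2⟩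
    · rintro rfl h
      simp only [Fm.skolemize_and, Fm.holds_and] at *
      exact ⟨(ihA false γs h1.1 h2A v).2 rfl h.1, (ihB false γs h1.2.1 h2B v).2 rfl h.2⟩
  | all x A ih =>
    intro b γs h1 h2 v
    simp only [Fm.boundVars, List.nodup_cons] at h1
    have h2A : ∀ z ∈ γs, z ∉ A.boundVars := fun z hz h =>
      h2 z hz (by simp [Fm.boundVars, h])
    constructor
    · rintro rfl h
      rw [Fm.skolemize_all, if_pos rfl]
      have hxb : x ∉ (A.skolemize true γs).boundVars :=
        fun hh => h1.1 ((Fm.boundVars_skolemize true γs A).mem hh)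
      have htb : ∀ z ∈ (skTm x γs).varsT, z ∉ (A.skolemize true γs).boundVars := by
        intro z hz hh
        rw [skTm_varsT] at hz
        exact h2A z hz ((Fm.boundVars_skolemize true γs A).mem hh)
      rw [Fm.holds_subst hxb htb]
      exact (ih true γs h1.2 h2A _).1 rfl (h _)
    · rintro rfl h
      rw [Fm.skolemize_all, if_neg (by simp)] at h
      intro d
      have h2A' : ∀ z ∈ γs ++ [x], z ∉ A.boundVars := by
        intro z hz
        rcases List.mem_append.1 hz with h' | h'
        · exact h2A z h'
        · simpa using (by simpa using h' : z = x) ▸ h1.1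
      exact (ih false (γs ++ [x]) h1.2 h2A' _).2 rfl (h d)
  | ex x A ih =>
    intro b γs h1 h2 v
    simp only [Fm.boundVars, List.nodup_cons] at h1
    have h2A : ∀ z ∈ γs, z ∉ A.boundVars := fun z hz h =>
      h2 z hz (by simp [Fm.boundVars, h])
    constructor
    · rintro rfl h
      rw [Fm.skolemize_ex, if_pos rfl]
      obtain ⟨d, hd⟩ := h
      have h2A' : ∀ z ∈ γs ++ [x], z ∉ A.boundVars := by
        intro z hz
        rcases List.mem_append.1 hz with h' | h'
        · exact h2A z h'
        · simpa using (by simpa using h' : z = x) ▸ h1.1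
      exact ⟨d, (ih true (γs ++ [x]) h1.2 h2A' _).1 rfl hd⟩
    · rintro rfl h
      rw [Fm.skolemize_ex, if_neg (by simp)] at h
      have hxb : x ∉ (A.skolemize false γs).boundVars :=
        fun hh => h1.1 ((Fm.boundVars_skolemize false γs A).mem hh)
      have htb : ∀ z ∈ (skTm x γs).varsT, z ∉ (A.skolemize false γs).boundVars := by
        intro z hz hh
        rw [skTm_varsT] at hz
        exact h2A z hz ((Fm.boundVars_skolemize false γs A).mem hh)
      rw [Fm.holds_subst hxb htb] at h
      exact ⟨_, (ih false γs h1.2 h2A _).2 rfl h⟩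

theorem Fm.holds_outerSk {D} {I : Interp D} {A : Fm} (hA : A.boundVars.Nodup)
    {v : ℕ → D} (h : A.holds I v) : A.outerSk.holds I v := by
  exact (Fm.holds_skolemize true [] hA (by simp) v).1 rfl h

@[simp] theorem Fm.expandL_atom (T p ts) : (Fm.atom p ts).expandL T = .atom p ts := by
  rw [Fm.expandL]
@[simp] theorem Fm.expandL_neg (T) (A : Fm) :
    (Fm.neg A).expandL T = .neg (A.expandL T) := by rw [Fm.expandL]
@[simp] theorem Fm.expandL_or (T) (A B : Fm) :
    (Fm.or A B).expandL T = .or (A.expandL T) (B.expandL T) := by rw [Fm.expandL]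
@[simp] theorem Fm.expandL_and (T) (A B : Fm) :
    (Fm.and A B).expandL T = .and (A.expandL T) (B.expandL T) := by rw [Fm.expandL]
@[simp] theorem Fm.expandL_ex (T x) (A : Fm) :
    (Fm.ex x A).expandL T = bigOr (T.map fun t => Fm.subst x t (A.expandL T)) := by
  rw [Fm.expandL]
@[simp] theorem Fm.expandL_all (T x) (A : Fm) :
    (Fm.all x A).expandL T = bigAnd (T.map fun t => Fm.subst x t (A.expandL T)) := by
  rw [Fm.expandL]

theorem Fm.boundVars_expandL (T) (C : Fm) : (C.expandL T).boundVars = [] :=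
  Fm.boundVars_of_qf Fm.qf_expandL

theorem Fm.holds_subst_qf {D} {I : Interp D} {x : ℕ} {t : Tm} {C : Fm} (h : C.qf)
    {v : ℕ → D} : (Fm.subst x t C).holds I v ↔
      C.holds I (Function.update v x (Tm.eval I v t)) :=
  Fm.holds_subst (by simp [Fm.boundVars_of_qf h]) (by simp [Fm.boundVars_of_qf h])

/-- Soundness of the expansion: in any structure, the expansion of `C` implies `C`
(for formulas with only existentialoid quantifiers). -/
theorem Fm.holds_expandL {D} {I : Interp D} {C : Fm} {T : List Tm} :
    ∀ (b : Bool), C.exOnly b → ∀ v : ℕ → D,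
      (b = true → (C.expandL T).holds I v → C.holds I v) ∧
      (b = false → C.holds I v → (C.expandL T).holds I v) := by
  induction C with
  | atom p ts => intro b _ v; constructor <;> intro _ h <;> simpa using h
  | neg A ih =>
    intro b hb v
    constructor
    · rintro rfl h
      simp only [Fm.expandL_neg, Fm.holds_neg] at *
      exact fun hh => h ((ih false hb v).2 rfl hh)
    · rintro rfl h
      simp only [Fm.expandL_neg, Fm.holds_neg] at *
      exact fun hh => h ((ih true hb v).1 rfl hh)
  | or A B ihA ihB =>
    intro b hb v
    constructor
    · rintro rfl h
      simp only [Fm.expandL_or, Fm.holds_or] at *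
      rcases h with h | h
      · exact Or.inl ((ihA true hb.1 v).1 rfl h)
      · exact Or.inr ((ihB true hb.2 v).1 rfl h)
    · rintro rfl h
      simp only [Fm.expandL_or, Fm.holds_or] at *
      rcases h with h | h
      · exact Or.inl ((ihA false hb.1 v).2 rfl h)
      · exact Or.inr ((ihB false hb.2 v).2 rfl h)
  | and A B ihA ihB =>
    intro b hb v
    constructor
    · rintro rfl h
      simp only [Fm.expandL_and, Fm.holds_and] at *
      exact ⟨(ihA true hb.1 v).1 rfl h.1, (ihB true hb.2 v).1 rfl h.2⟩
    · rintro rfl h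
      simp only [Fm.expandL_and, Fm.holds_and] at *
      exact ⟨(ihA false hb.1 v).2 rfl h.1, (ihB false hb.2 v).2 rfl h.2⟩
  | all x A ih =>
    intro b hb v
    obtain ⟨rfl, hA⟩ := hb
    constructor
    · rintro h; exact absurd h.symm (by simp)
    · rintro _ h
      simp only [Fm.expandL_all]
      rw [Fm.holds_bigAnd]
      rintro G hG
      simp only [List.mem_map] at hG
      obtain ⟨t, htT, rfl⟩ := hG
      rw [Fm.holds_subst_qf Fm.qf_expandL]
      exact (ih false hA _).2 rfl (h _)
  | ex x A ih =>
    intro b hb v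
    obtain ⟨rfl, hA⟩ := hb
    constructor
    · rintro _ h
      simp only [Fm.expandL_ex] at h
      rw [Fm.holds_bigOr] at h
      obtain ⟨G, hG, h⟩ := h
      simp only [List.mem_map] at hG
      obtain ⟨t, htT, rfl⟩ := hG
      rw [Fm.holds_subst_qf Fm.qf_expandL] at h
      exact ⟨_, (ih true hA _).1 rfl h⟩
    · rintro h; exact absurd h (by simp)

/-- Monotonicity of the expansion in the set of terms. -/
theorem Fm.expandL_mono {D} {I : Interp D} {C : Fm} {T T' : List Tm}
    (hT : ∀ t ∈ T, t ∈ T') :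
    ∀ (b : Bool), C.exOnly b → ∀ v : ℕ → D,
      (b = true → (C.expandL T).holds I v → (C.expandL T').holds I v) ∧
      (b = false → (C.expandL T').holds I v → (C.expandL T).holds I v) := by
  induction C with
  | atom p ts => intro b _ v; constructor <;> intro _ h <;> simpa using h
  | neg A ih =>
    intro b hb v
    constructor
    · rintro rfl h
      simp only [Fm.expandL_neg, Fm.holds_neg] at *
      exact fun hh => h ((ih false hb v).2 rfl hh)
    · rintro rfl h
      simp only [Fm.expandL_neg, Fm.holds_neg] at *
      exact fun hh => h ((ih true hb v).1 rfl hh)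
  | or A B ihA ihB =>
    intro b hb v
    constructor
    · rintro rfl h
      simp only [Fm.expandL_or, Fm.holds_or] at *
      rcases h with h | h
      · exact Or.inl ((ihA true hb.1 v).1 rfl h)
      · exact Or.inr ((ihB true hb.2 v).1 rfl h)
    · rintro rfl h
      simp only [Fm.expandL_or, Fm.holds_or] at *
      rcases h with h | h
      · exact Or.inl ((ihA false hb.1 v).2 rfl h)
      · exact Or.inr ((ihB false hb.2 v).2 rfl h)
  | and A B ihA ihB =>
    intro b hb v
    constructor
    · rintro rfl h
      simp only [Fm.expandL_and, Fm.holds_and] at *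
      exact ⟨(ihA true hb.1 v).1 rfl h.1, (ihB true hb.2 v).1 rfl h.2⟩
    · rintro rfl h
      simp only [Fm.expandL_and, Fm.holds_and] at *
      exact ⟨(ihA false hb.1 v).2 rfl h.1, (ihB false hb.2 v).2 rfl h.2⟩
  | all x A ih =>
    intro b hb v
    obtain ⟨rfl, hA⟩ := hb
    constructor
    · rintro h; exact absurd h.symm (by simp)
    · rintro _ h
      simp only [Fm.expandL_all] at *
      rw [Fm.holds_bigAnd] at *
      rintro G hG
      simp only [List.mem_map] at hG
      obtain ⟨t, htT, rfl⟩ := hG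
      rw [Fm.holds_subst_qf Fm.qf_expandL]
      have := h _ (List.mem_map.2 ⟨t, hT t htT, rfl⟩)
      rw [Fm.holds_subst_qf Fm.qf_expandL] at this
      exact (ih false hA _).2 rfl this
  | ex x A ih =>
    intro b hb v
    obtain ⟨rfl, hA⟩ := hb
    constructor
    · rintro _ h
      simp only [Fm.expandL_ex] at *
      rw [Fm.holds_bigOr] at *
      obtain ⟨G, hG, h⟩ := h
      simp only [List.mem_map] at hG
      obtain ⟨t, htT, rfl⟩ := hG
      rw [Fm.holds_subst_qf Fm.qf_expandL] at h
      refine ⟨_, List.mem_map.2 ⟨t, hT t htT, rfl⟩, ?_⟩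
      rw [Fm.holds_subst_qf Fm.qf_expandL]
      exact (ih true hA _).1 rfl h
    · rintro h; exact absurd h (by simp)

/-- Terms over the language of `F` (with `•` allowed if `F.allowBullet`). -/
def LangOK (F : Fm) (t : Tm) : Prop :=
  (∀ p ∈ t.symsT, p ∈ F.symsF ∨ (F.allowBullet = true ∧ p = (none, 0))) ∧
  (∀ z ∈ t.varsT, z ∈ F.freeVars)

theorem LangOK_var {F : Fm} {z : ℕ} (h : z ∈ F.freeVars) : LangOK F (.var z) := by
  constructor
  · intro p hp; simp at hp
  · intro y hy; simp at hy; exact hy ▸ h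

theorem LangOK_fn {F : Fm} {f : FSym} {ts : List Tm}
    (hf : (f, ts.length) ∈ F.symsF ∨ (F.allowBullet = true ∧ f = none ∧ ts = []))
    (hts : ∀ t ∈ ts, LangOK F t) : LangOK F (.fn f ts) := by
  constructor
  · intro p hp
    simp only [Tm.symsT_fn, List.mem_cons, List.mem_flatMap] at hp
    rcases hp with rfl | ⟨t, ht, hp⟩
    · rcases hf with h | ⟨h1, h2, h3⟩
      · exact Or.inl h
      · exact Or.inr ⟨h1, by simp [h2, h3]⟩
    · exact (hts t ht).1 p hp
  · intro z hz
    simp only [Tm.varsT_fn, List.mem_flatMap] at hz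
    obtain ⟨t, ht, hz⟩ := hz
    exact (hts t ht).2 z hz

theorem mem_tuples {T : List Tm} : ∀ {k : ℕ} {l : List Tm},
    l ∈ tuples k T ↔ l.length = k ∧ ∀ a ∈ l, a ∈ T := by
  intro k
  induction k with
  | zero =>
    intro l
    simp only [tuples, List.mem_singleton]
    constructor
    · rintro rfl; simp
    · rintro ⟨h, _⟩; exact List.length_eq_zero_iff.1 h
  | succ k ih =>
    intro l
    simp only [tuples, List.mem_flatMap, List.mem_map]
    constructor
    · rintro ⟨a, ha, l', hl', rfl⟩
      obtain ⟨h1, h2⟩ := ih.1 hl'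
      refine ⟨by simp [h1], ?_⟩
      intro b hb
      rcases List.mem_cons.1 hb with rfl | hb'
      · exact ha
      · exact h2 b hb'
    · rintro ⟨h1, h2⟩
      cases l with
      | nil => simp at h1
      | cons a l' =>
        refine ⟨a, h2 a (by simp), l', ih.2 ⟨by simpa using h1, fun b hb => h2 b (by simp [hb])⟩, rfl⟩

theorem champTm_succ_subset (F : Fm) : ∀ n, ∀ t ∈ F.champTm n, t ∈ F.champTm (n + 1) := by
  intro n
  induction n with
  | zero => intro t ht; simp [Fm.champTm] at ht
  | succ n ih =>
    cases n with
    | zero => intro t ht; simp [Fm.champTm] at ht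
    | succ m =>
      intro t ht
      rw [Fm.champTm] at ht ⊢
      simp only [List.mem_append, List.mem_flatMap, List.mem_map] at ht ⊢
      rcases ht with (h | h) | ⟨p, hp, l, hl, rfl⟩
      · exact Or.inl (Or.inl h)
      · exact Or.inl (Or.inr h)
      · refine Or.inr ⟨p, hp, l, ?_, rfl⟩
        obtain ⟨h1, h2⟩ := mem_tuples.1 hl
        exact mem_tuples.2 ⟨h1, fun a ha => ih a (h2 a ha)⟩

theorem champTm_subset (F : Fm) {n m : ℕ} (h : n ≤ m) :
    ∀ t ∈ F.champTm n, t ∈ F.champTm m := by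
  induction m with
  | zero => intro t ht; exact (Nat.le_zero.1 h) ▸ ht
  | succ m ih =>
    rcases Nat.lt_or_ge n (m+1) with h' | h'
    · exact fun t ht => champTm_succ_subset F m t (ih (Nat.lt_succ_iff.1 h') t ht)
    · have : n = m + 1 := Nat.le_antisymm h h'
      exact this ▸ fun t ht => ht

/-- Soundness of the champ fini: its terms are over the language of `F`. -/
theorem champTm_sound (F : Fm) : ∀ n, ∀ t ∈ F.champTm n, LangOK F t := by
  intro n
  induction n with
  | zero => intro t ht; simp [Fm.champTm] at ht
  | succ n ih =>
    cases n with
    | zero => intro t ht; simp [Fm.champTm] at ht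
    | succ m =>
      intro t ht
      rw [Fm.champTm] at ht
      simp only [List.mem_append, List.mem_flatMap, List.mem_map] at ht
      rcases ht with (h | h) | ⟨p, hp, l, hl, rfl⟩
      · obtain ⟨z, hz, rfl⟩ := h
        exact LangOK_var hz
      · by_cases hb : F.allowBullet
        · rw [if_pos hb] at h
          simp at h
          subst h
          exact LangOK_fn (Or.inr ⟨hb, rfl, rfl⟩) (by simp)
        · rw [if_neg hb] at h; exact absurd h List.not_mem_nil
      · obtain ⟨h1, h2⟩ := mem_tuples.1 hl
        exact LangOK_fn (Or.inl (by rwa [h1])) (fun a ha => ih a (h2 a ha))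

theorem Tm.one_le_height (t : Tm) : 1 ≤ t.height := by
  induction t using Tm.ind with
  | hv z => simp
  | hf g us _ => rw [Tm.height_fn]; omega

theorem foldr_max_le {ts : List Tm} {t : Tm} (ht : t ∈ ts) :
    t.height ≤ ts.foldr (fun t m => max t.height m) 0 := by
  induction ts with
  | nil => simp at ht
  | cons a l ih =>
    rcases List.mem_cons.1 ht with rfl | h'
    · simp
    · exact le_max_of_le_right (ih h')

/-- Completeness of the champ fini: every language term of height `< n` is in it. -/
theorem champTm_complete {F : Fm} {t : Tm} (h : LangOK F t) :
    ∀ {n : ℕ}, 2 ≤ n → t.height < n → t ∈ F.champTm n := by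
  induction t using Tm.ind with
  | hv z =>
    intro n h2 _
    obtain ⟨m, rfl⟩ : ∃ m, n = m + 2 := ⟨n - 2, by omega⟩
    rw [Fm.champTm]
    simp only [List.mem_append]
    exact Or.inl (Or.inl (List.mem_map.2 ⟨z, h.2 z (by simp), rfl⟩))
  | hf f ts ih =>
    intro n h2 hht
    obtain ⟨m, rfl⟩ : ∃ m, n = m + 2 := ⟨n - 2, by omega⟩
    rw [Fm.champTm]
    simp only [List.mem_append]
    have hsub : ∀ t' ∈ ts, LangOK F t' := by
      intro t' ht'
      constructor
      · intro p hp
        refine h.1 p ?_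
        simp only [Tm.symsT_fn, List.mem_cons, List.mem_flatMap]
        exact Or.inr ⟨t', ht', hp⟩
      · intro z hz
        refine h.2 z ?_
        simp only [Tm.varsT_fn, List.mem_flatMap]
        exact ⟨t', ht', hz⟩
    have hhts : ∀ t' ∈ ts, t'.height < m + 1 := by
      intro t' ht'
      have := foldr_max_le ht'
      rw [Tm.height_fn] at hht
      omega
    rcases h.1 (f, ts.length) (by simp) with hf | ⟨hb, hf⟩
    · right
      refine List.mem_flatMap.2 ⟨(f, ts.length), hf, List.mem_map.2 ⟨ts, ?_, rfl⟩⟩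
      refine mem_tuples.2 ⟨rfl, fun a ha => ?_⟩
      rcases Nat.lt_or_ge (m+1) 2 with hm | hm
      · -- m = 0 : impossible since heights are ≥ 1
        exfalso
        have h1 := hhts a ha
        have h2 := Tm.one_le_height a
        omega
      · exact ih a ha (hsub a ha) hm (hhts a ha)
    · left; right
      have hf1 : f = none := by
        have := congrArg Prod.fst hf; simpa using this
      have hts0 : ts = [] := by
        have := congrArg Prod.snd hf
        simpa using List.length_eq_zero_iff.1 (by simpa using this)
      rw [if_pos hb]
      simp [hf1, hts0]

theorem champTm_nonempty (F : Fm) : ∃ t, t ∈ F.champTm 2 := by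
  by_cases hfv : F.freeVars = []
  · by_cases hc : ∃ p ∈ F.symsF, p.2 = 0
    · obtain ⟨⟨f0, a0⟩, hp, hp2⟩ := hc
      dsimp at hp2
      subst hp2
      refine ⟨Tm.fn f0 [], champTm_complete (LangOK_fn (Or.inl ?_) (by simp)) le_rfl ?_⟩
      · simpa using hp
      · rw [Tm.height_fn]; simp
    · have hb : F.allowBullet = true := by
        rw [Fm.allowBullet]
        simp only [Bool.and_eq_true, List.all_eq_true]
        refine ⟨by simp [hfv], fun p hp => ?_⟩
        simp only [bne_iff_ne, ne_eq]
        exact fun h => hc ⟨p, hp, h⟩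
      refine ⟨Tm.fn none [], champTm_complete (LangOK_fn (Or.inr ⟨hb, rfl, rfl⟩) (by simp)) le_rfl ?_⟩
      rw [Tm.height_fn]; simp
  · obtain ⟨z, hz⟩ := List.exists_mem_of_ne_nil _ hfv
    exact ⟨Tm.var z, champTm_complete (LangOK_var hz) le_rfl (by simp)⟩

theorem Fm.atoms_subst_qf {x : ℕ} {u : Tm} {C : Fm} (h : C.qf) :
    (Fm.subst x u C).atoms = C.atoms.map fun a => (a.1, a.2.map (Tm.substT x u)) := by
  induction C with
  | atom p ts => simp [Fm.subst, Fm.atoms]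
  | neg A ih => simpa [Fm.subst, Fm.atoms] using ih h
  | or A B ihA ihB => simp [Fm.subst, Fm.atoms, ihA h.1, ihB h.2]
  | and A B ihA ihB => simp [Fm.subst, Fm.atoms, ihA h.1, ihB h.2]
  | all y A ih => exact absurd h (by simp)
  | ex y A ih => exact absurd h (by simp)

theorem Fm.atoms_bigOr {l : List Fm} :
    ∀ a ∈ (bigOr l).atoms, (∃ G ∈ l, a ∈ G.atoms) ∨ a = (0, []) := by
  induction l with
  | nil => intro a ha; right; simpa [bigOr, falsum, Fm.atoms] using ha
  | cons A l ih =>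
    cases l with
    | nil => intro a ha; exact Or.inl ⟨A, by simp, ha⟩
    | cons B r =>
      intro a ha
      rw [bigOr] at ha
      simp only [Fm.atoms, List.mem_append] at ha
      rcases ha with h | h
      · exact Or.inl ⟨A, by simp, h⟩
      · rcases ih a h with ⟨G, hG, h'⟩ | h'
        · exact Or.inl ⟨G, List.mem_cons_of_mem _ hG, h'⟩
        · exact Or.inr h'

theorem Fm.atoms_bigAnd {l : List Fm} :
    ∀ a ∈ (bigAnd l).atoms, (∃ G ∈ l, a ∈ G.atoms) ∨ a = (0, []) := by
  induction l with
  | nil => intro a ha; right; simpa [bigAnd, verum, Fm.atoms] using ha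
  | cons A l ih =>
    cases l with
    | nil => intro a ha; exact Or.inl ⟨A, by simp, ha⟩
    | cons B r =>
      intro a ha
      rw [bigAnd] at ha
      simp only [Fm.atoms, List.mem_append] at ha
      rcases ha with h | h
      · exact Or.inl ⟨A, by simp, h⟩
      · rcases ih a h with ⟨G, hG, h'⟩ | h'
        · exact Or.inl ⟨G, List.mem_cons_of_mem _ hG, h'⟩
        · exact Or.inr h'

/-- Atom terms of an expansion stay inside the language. -/
theorem atomTms_expandL {C : Fm} {T : List Tm} :
    ∀ a ∈ (C.expandL T).atoms, ∀ s ∈ a.2,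
      (∀ p ∈ s.symsT, p ∈ C.symsF ∨ ∃ t ∈ T, p ∈ t.symsT) ∧
      (∀ z ∈ s.varsT, z ∈ C.freeVars ∨ ∃ t ∈ T, z ∈ t.varsT) := by
  induction C with
  | atom p ts =>
    intro a ha s hs
    simp only [Fm.expandL_atom, Fm.atoms, List.mem_singleton] at ha
    subst ha
    constructor
    · intro q hq; left; simp only [Fm.symsF, List.mem_flatMap]; exact ⟨s, hs, hq⟩
    · intro z hz; left; simp only [Fm.freeVars, List.mem_flatMap]; exact ⟨s, hs, hz⟩
  | neg A ih => exact fun a ha => ih a ha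
  | or A B ihA ihB =>
    intro a ha s hs
    simp only [Fm.expandL_or, Fm.atoms, List.mem_append] at ha
    constructor
    · intro q hq
      rcases ha with h | h
      · rcases ((ihA a h s hs).1 q hq) with h' | h'
        · left; simp [Fm.symsF, h']
        · right; exact h'
      · rcases ((ihB a h s hs).1 q hq) with h' | h'
        · left; simp [Fm.symsF, h']
        · right; exact h'
    · intro z hz
      rcases ha with h | h
      · rcases ((ihA a h s hs).2 z hz) with h' | h'
        · left; simp [Fm.freeVars, h']
        · right; exact h'
      · rcases ((ihB a h s hs).2 z hz) with h' | h'
        · left; simp [Fm.freeVars, h']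
        · right; exact h'
  | and A B ihA ihB =>
    intro a ha s hs
    simp only [Fm.expandL_and, Fm.atoms, List.mem_append] at ha
    constructor
    · intro q hq
      rcases ha with h | h
      · rcases ((ihA a h s hs).1 q hq) with h' | h'
        · left; simp [Fm.symsF, h']
        · right; exact h'
      · rcases ((ihB a h s hs).1 q hq) with h' | h'
        · left; simp [Fm.symsF, h']
        · right; exact h'
    · intro z hz
      rcases ha with h | h
      · rcases ((ihA a h s hs).2 z hz) with h' | h'
        · left; simp [Fm.freeVars, h']
        · right; exact h'
      · rcases ((ihB a h s hs).2 z hz) with h' | h'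
        · left; simp [Fm.freeVars, h']
        · right; exact h'
  | all x A ih =>
    intro a ha s hs
    simp only [Fm.expandL_all] at ha
    rcases Fm.atoms_bigAnd a ha with ⟨G, hG, haG⟩ | h
    · simp only [List.mem_map] at hG
      obtain ⟨t, htT, rfl⟩ := hG
      rw [Fm.atoms_subst_qf Fm.qf_expandL] at haG
      simp only [List.mem_map] at haG
      obtain ⟨a₀, ha₀, rfl⟩ := haG
      simp only [List.mem_map] at hs
      obtain ⟨s₀, hs₀, rfl⟩ := hs
      constructor
      · intro q hq
        rcases Tm.symsT_substT q hq with h' | h'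
        · rcases (ih a₀ ha₀ s₀ hs₀).1 q h' with h'' | h''
          · left; exact h''
          · right; exact h''
        · right; exact ⟨t, htT, h'⟩
      · intro z hz
        rcases Tm.varsT_substT z hz with ⟨h1, h2⟩ | h'
        · rcases (ih a₀ ha₀ s₀ hs₀).2 z h1 with h'' | h''
          · left; simp only [Fm.freeVars, List.mem_filter, decide_eq_true_eq]
            exact ⟨h'', h2⟩
          · right; exact h''
        · right; exact ⟨t, htT, h'⟩
    · subst h; simp at hs
  | ex x A ih =>
    intro a ha s hs
    simp only [Fm.expandL_ex] at ha
    rcases Fm.atoms_bigOr a ha with ⟨G, hG, haG⟩ | h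
    · simp only [List.mem_map] at hG
      obtain ⟨t, htT, rfl⟩ := hG
      rw [Fm.atoms_subst_qf Fm.qf_expandL] at haG
      simp only [List.mem_map] at haG
      obtain ⟨a₀, ha₀, rfl⟩ := haG
      simp only [List.mem_map] at hs
      obtain ⟨s₀, hs₀, rfl⟩ := hs
      constructor
      · intro q hq
        rcases Tm.symsT_substT q hq with h' | h'
        · rcases (ih a₀ ha₀ s₀ hs₀).1 q h' with h'' | h''
          · left; exact h''
          · right; exact h''
        · right; exact ⟨t, htT, h'⟩
      · intro z hz
        rcases Tm.varsT_substT z hz with ⟨h1, h2⟩ | h'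
        · rcases (ih a₀ ha₀ s₀ hs₀).2 z h1 with h'' | h''
          · left; simp only [Fm.freeVars, List.mem_filter, decide_eq_true_eq]
            exact ⟨h'', h2⟩
          · right; exact h''
        · right; exact ⟨t, htT, h'⟩
    · subst h; simp at hs

instance instMemDecFSym (p : FSym × ℕ) (l : List (FSym × ℕ)) : Decidable (p ∈ l) :=
  decidable_of_iff (∃ x ∈ l, x = p) (by simp)

/-- The domain of the term model: terms over the language of `F`. -/
def TD (F : Fm) : Type := {t : Tm // LangOK F t}

attribute [reducible] TD

open scoped Classical in
noncomputable def termInterp (F : Fm) (β : ℕ → List Tm → Bool) (d₀ : TD F) :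
    Interp (TD F) where
  fns f ds :=
    if h : (f, ds.length) ∈ F.symsF ∨ (F.allowBullet = true ∧ f = none ∧ ds.length = 0) then
      ⟨.fn f (ds.map Subtype.val), by
        refine LangOK_fn ?_ ?_
        · rcases h with h | ⟨h1, h2, h3⟩
          · left; simpa using h
          · right
            exact ⟨h1, h2, by rw [List.length_eq_zero_iff.1 h3]; rfl⟩
        · intro t ht
          simp only [List.mem_map] at ht
          obtain ⟨d, hd, rfl⟩ := ht
          exact d.2⟩
    else d₀
  prd p ds := β p (ds.map Subtype.val) = true

noncomputable def vcan (F : Fm) (d₀ : TD F) : ℕ → TD F :=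
  fun z => if h : z ∈ F.freeVars then ⟨.var z, LangOK_var h⟩ else d₀

theorem termInterp_fns_val (F : Fm) (β) (d₀ : TD F) (f : FSym) (ds : List (TD F))
    (h : (f, ds.length) ∈ F.symsF ∨ (F.allowBullet = true ∧ f = none ∧ ds.length = 0)) :
    ((termInterp F β d₀).fns f ds).val = .fn f (ds.map Subtype.val) := by
  show ((if h : (f, ds.length) ∈ F.symsF ∨ (F.allowBullet = true ∧ f = none ∧ ds.length = 0)
    then _ else d₀ : TD F)).val = _
  rw [dif_pos h]

theorem eval_vcan_val {F : Fm} {β} {d₀ : TD F} {t : Tm} (h : LangOK F t)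
    {v : ℕ → TD F} (hv : ∀ z ∈ F.freeVars, v z = vcan F d₀ z) :
    (Tm.eval (termInterp F β d₀) v t).val = t := by
  induction t using Tm.ind with
  | hv z =>
    have hz : z ∈ F.freeVars := h.2 z (by simp)
    rw [Tm.eval_var, hv z hz, vcan, dif_pos hz]
  | hf f ts ih =>
    have hsub : ∀ t' ∈ ts, LangOK F t' := by
      intro t' ht'
      constructor
      · intro p hp
        refine h.1 p ?_
        simp only [Tm.symsT_fn, List.mem_cons, List.mem_flatMap]
        exact Or.inr ⟨t', ht', hp⟩
      · intro z hz
        refine h.2 z ?_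
        simp only [Tm.varsT_fn, List.mem_flatMap]
        exact ⟨t', ht', hz⟩
    rw [Tm.eval_fn]
    have hcond : ((f, ((ts.map (Tm.eval (termInterp F β d₀) v))).length) ∈ F.symsF ∨
        (F.allowBullet = true ∧ f = none ∧ ((ts.map (Tm.eval (termInterp F β d₀) v))).length = 0)) := by
      rcases h.1 (f, ts.length) (by simp) with h' | ⟨h1, h2⟩
      · left; simpa using h'
      · right
        have hf1 : f = none := by have := congrArg Prod.fst h2; simpa using this
        have hts : ts.length = 0 := by
          have := congrArg Prod.snd h2; simpa using this
        exact ⟨h1, hf1, by simpa using hts⟩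
    rw [termInterp_fns_val F β d₀ f _ hcond]
    simp only [List.map_map]
    congr 1
    have : ∀ t' ∈ ts, (Subtype.val ∘ Tm.eval (termInterp F β d₀) v) t' = id t' := by
      intro t' ht'
      exact ih t' ht' (hsub t' ht')
    rw [List.map_congr_left this, List.map_id]

theorem eval_vcan {F : Fm} {β} {d₀ : TD F} {t : Tm} (h : LangOK F t)
    {v : ℕ → TD F} (hv : ∀ z ∈ F.freeVars, v z = vcan F d₀ z) :
    Tm.eval (termInterp F β d₀) v t = ⟨t, h⟩ :=
  Subtype.ext (eval_vcan_val h hv)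

/-- If `C` holds in the term model, then some finite expansion of it holds. -/
theorem holds_term_expand {F : Fm} {β} {d₀ : TD F} {C : Fm} :
    ∀ (b : Bool), C.exOnly b → (∀ z ∈ C.boundVars, z ∉ F.freeVars) →
    ∀ v : ℕ → TD F, (∀ z ∈ F.freeVars, v z = vcan F d₀ z) →
      (b = true → C.holds (termInterp F β d₀) v →
        ∃ m, 2 ≤ m ∧ (C.expandL (F.champTm m)).holds (termInterp F β d₀) v) ∧
      (b = false → (∀ m, 2 ≤ m → (C.expandL (F.champTm m)).holds (termInterp F β d₀) v) →
        C.holds (termInterp F β d₀) v) := by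
  set I := termInterp F β d₀ with hI
  induction C with
  | atom p ts =>
    intro b _ _ v _
    constructor
    · rintro rfl h; exact ⟨2, le_rfl, by simpa using h⟩
    · rintro rfl h; simpa using h 2 le_rfl
  | neg A ih =>
    intro b hb hbv v hv
    constructor
    · rintro rfl h
      by_contra hc
      push_neg at hc
      refine h ((ih false hb hbv v hv).2 rfl ?_)
      intro m hm
      have := hc m hm
      simpa using this
    · rintro rfl h
      simp only [Fm.holds_neg]
      intro h'
      obtain ⟨m, hm, hh⟩ := (ih true hb hbv v hv).1 rfl h'
      exact (by simpa using h m hm : ¬ (A.expandL (F.champTm m)).holds I v) hh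
  | or A B ihA ihB =>
    intro b hb hbv v hv
    have hbvA : ∀ z ∈ A.boundVars, z ∉ F.freeVars := fun z hz => hbv z (by simp [Fm.boundVars, hz])
    have hbvB : ∀ z ∈ B.boundVars, z ∉ F.freeVars := fun z hz => hbv z (by simp [Fm.boundVars, hz])
    constructor
    · rintro rfl h
      rcases h with h | h
      · obtain ⟨m, hm, hh⟩ := (ihA true hb.1 hbvA v hv).1 rfl h
        exact ⟨m, hm, Or.inl hh⟩
      · obtain ⟨m, hm, hh⟩ := (ihB true hb.2 hbvB v hv).1 rfl h
        exact ⟨m, hm, Or.inr hh⟩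
    · rintro rfl h
      by_contra hc
      simp only [Fm.holds_or, not_or] at hc
      have h1 : ¬ ∀ m, 2 ≤ m → (A.expandL (F.champTm m)).holds I v :=
        fun hh => hc.1 ((ihA false hb.1 hbvA v hv).2 rfl hh)
      have h2 : ¬ ∀ m, 2 ≤ m → (B.expandL (F.champTm m)).holds I v :=
        fun hh => hc.2 ((ihB false hb.2 hbvB v hv).2 rfl hh)
      push_neg at h1 h2
      obtain ⟨m1, hm1, hh1⟩ := h1
      obtain ⟨m2, hm2, hh2⟩ := h2
      have hm := h (max m1 m2) (le_trans hm1 (le_max_left _ _))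
      rcases hm with hm | hm
      · exact hh1 ((Fm.expandL_mono (champTm_subset F (le_max_left m1 m2)) false hb.1 v).2 rfl hm)
      · exact hh2 ((Fm.expandL_mono (champTm_subset F (le_max_right m1 m2)) false hb.2 v).2 rfl hm)
  | and A B ihA ihB =>
    intro b hb hbv v hv
    have hbvA : ∀ z ∈ A.boundVars, z ∉ F.freeVars := fun z hz => hbv z (by simp [Fm.boundVars, hz])
    have hbvB : ∀ z ∈ B.boundVars, z ∉ F.freeVars := fun z hz => hbv z (by simp [Fm.boundVars, hz])
    constructor
    · rintro rfl h
      obtain ⟨m1, hm1, hh1⟩ := (ihA true hb.1 hbvA v hv).1 rfl h.1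
      obtain ⟨m2, hm2, hh2⟩ := (ihB true hb.2 hbvB v hv).1 rfl h.2
      refine ⟨max m1 m2, le_trans hm1 (le_max_left _ _), ?_, ?_⟩
      · exact (Fm.expandL_mono (champTm_subset F (le_max_left m1 m2)) true hb.1 v).1 rfl hh1
      · exact (Fm.expandL_mono (champTm_subset F (le_max_right m1 m2)) true hb.2 v).1 rfl hh2
    · rintro rfl h
      exact ⟨(ihA false hb.1 hbvA v hv).2 rfl fun m hm => (h m hm).1,
             (ihB false hb.2 hbvB v hv).2 rfl fun m hm => (h m hm).2⟩
  | all x A ih =>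
    intro b hb hbv v hv
    obtain ⟨rfl, hA⟩ := hb
    have hbvA : ∀ z ∈ A.boundVars, z ∉ F.freeVars := fun z hz => hbv z (by simp [Fm.boundVars, hz])
    constructor
    · rintro h; exact absurd h.symm (by simp)
    · rintro _ h
      intro d
      have hxv : ∀ z ∈ F.freeVars, Function.update v x d z = vcan F d₀ z := by
        intro z hz
        have hxz : ¬ (z = x) := fun hzz => hbv x (by simp [Fm.boundVars]) (hzz ▸ hz)
        rw [Function.update_apply, if_neg hxz]
        exact hv z hz
      refine (ih false hA hbvA _ hxv).2 rfl ?_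
      intro m' hm'
      set M := max m' (d.val.height + 1) with hM
      have hM2 : 2 ≤ M := le_trans hm' (le_max_left _ _)
      have hmem : d.val ∈ F.champTm M :=
        champTm_complete d.2 hM2 (lt_of_lt_of_le (Nat.lt_succ_self _) (le_max_right _ _))
      have hh := h M hM2
      simp only [Fm.expandL_all] at hh
      rw [Fm.holds_bigAnd] at hh
      have hcomp := hh _ (List.mem_map.2 ⟨d.val, hmem, rfl⟩)
      rw [Fm.holds_subst_qf Fm.qf_expandL] at hcomp
      rw [eval_vcan d.2 hv] at hcomp
      have : (⟨d.val, d.2⟩ : TD F) = d := Subtype.ext rfl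
      rw [this] at hcomp
      exact (Fm.expandL_mono (champTm_subset F (le_max_left m' _)) false hA _).2 rfl hcomp
  | ex x A ih =>
    intro b hb hbv v hv
    obtain ⟨rfl, hA⟩ := hb
    have hbvA : ∀ z ∈ A.boundVars, z ∉ F.freeVars := fun z hz => hbv z (by simp [Fm.boundVars, hz])
    constructor
    · rintro _ h
      obtain ⟨d, hd⟩ := h
      have hxv : ∀ z ∈ F.freeVars, Function.update v x d z = vcan F d₀ z := by
        intro z hz
        have hxz : ¬ (z = x) := fun hzz => hbv x (by simp [Fm.boundVars]) (hzz ▸ hz)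
        rw [Function.update_apply, if_neg hxz]
        exact hv z hz
      obtain ⟨m1, hm1, hh1⟩ := (ih true hA hbvA _ hxv).1 rfl hd
      set M := max m1 (d.val.height + 1) with hM
      have hM2 : 2 ≤ M := le_trans hm1 (le_max_left _ _)
      have hmem : d.val ∈ F.champTm M :=
        champTm_complete d.2 hM2 (lt_of_lt_of_le (Nat.lt_succ_self _) (le_max_right _ _))
      refine ⟨M, hM2, ?_⟩
      simp only [Fm.expandL_ex]
      rw [Fm.holds_bigOr]
      refine ⟨_, List.mem_map.2 ⟨d.val, hmem, rfl⟩, ?_⟩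
      rw [Fm.holds_subst_qf Fm.qf_expandL]
      rw [eval_vcan d.2 hv]
      have : (⟨d.val, d.2⟩ : TD F) = d := Subtype.ext rfl
      rw [this]
      exact (Fm.expandL_mono (champTm_subset F (le_max_left m1 _)) true hA _).1 rfl hh1
    · rintro h; exact absurd h (by simp)

/-- In the term model, the sentential value of a quantifier-free formula whose atom
terms lie in the language is its truth value. -/
theorem sentEval_term {F : Fm} {β} {d₀ : TD F} {G : Fm} (hqf : G.qf)
    (hat : ∀ a ∈ G.atoms, ∀ s ∈ a.2, LangOK F s) :
    G.sentEval β = true ↔ G.holds (termInterp F β d₀) (vcan F d₀) := by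
  rw [show G.sentEval β = G.sentEval (betaOf (termInterp F β d₀) (vcan F d₀)) from ?_]
  · exact Fm.sentEval_betaOf hqf
  · refine (Fm.sentEval_congr fun a ha => ?_).symm
    show betaOf _ _ a.1 a.2 = β a.1 a.2
    rw [betaOf]
    have : (a.2.map (Tm.eval (termInterp F β d₀) (vcan F d₀))).map Subtype.val = a.2 := by
      rw [List.map_map]
      have : ∀ s ∈ a.2, (Subtype.val ∘ Tm.eval (termInterp F β d₀) (vcan F d₀)) s = id s :=
        fun s hs => eval_vcan_val (hat a ha s hs) (fun z _ => rfl)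
      rw [List.map_congr_left this, List.map_id]
    have hprd : (termInterp F β d₀).prd a.1 (a.2.map (Tm.eval (termInterp F β d₀) (vcan F d₀)))
        ↔ β a.1 a.2 = true := by
      show (β a.1 ((a.2.map (Tm.eval (termInterp F β d₀) (vcan F d₀))).map Subtype.val) = true)
        ↔ (β a.1 a.2 = true)
      rw [this]
    split_ifs with h
    · exact (hprd.1 h).symm
    · cases hβ : β a.1 a.2
      · rfl
      · exact absurd (hprd.2 hβ) h

theorem continuous_sentEval (G : Fm) :
    Continuous (fun β : ℕ → List Tm → Bool => G.sentEval β) := by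
  induction G with
  | atom p ts => exact (continuous_apply ts).comp (continuous_apply p)
  | neg A ih =>
    exact (continuous_of_discreteTopology (f := fun b : Bool => !b)).comp ih
  | or A B ihA ihB =>
    exact (continuous_of_discreteTopology (f := fun b : Bool × Bool => b.1 || b.2)).comp
      (ihA.prodMk ihB)
  | and A B ihA ihB =>
    exact (continuous_of_discreteTopology (f := fun b : Bool × Bool => b.1 && b.2)).comp
      (ihA.prodMk ihB)
  | all x A ih => exact continuous_const
  | ex x A ih => exact continuous_const

/-- In the term model, truth of the expansion of `F` is equivalent to its
sentential value. -/
theorem sentEval_expand_iff {F : Fm} {β} {d₀ : TD F} {m : ℕ} :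
    (F.expandL (F.champTm m)).sentEval β = true ↔
      (F.expandL (F.champTm m)).holds (termInterp F β d₀) (vcan F d₀) := by
  refine sentEval_term Fm.qf_expandL ?_
  intro a ha s hs
  obtain ⟨h1, h2⟩ := atomTms_expandL a ha s hs
  constructor
  · intro p hp
    rcases h1 p hp with h | ⟨t, htT, hpt⟩
    · exact Or.inl h
    · exact (champTm_sound F m t htT).1 p hpt
  · intro z hz
    rcases h2 z hz with h | ⟨t, htT, hzt⟩
    · exact h
    · exact (champTm_sound F m t htT).2 z hzt

theorem rect_outerSk {A : Fm} (hrect : A.rectified) :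
    ∀ z ∈ A.outerSk.boundVars, z ∉ A.outerSk.freeVars := by
  intro z hz hzf
  have hzA : z ∈ A.boundVars := (Fm.boundVars_skolemize true [] A).mem hz
  rcases Fm.freeVars_skolemize z hzf with h | h
  · exact hrect.2 z hzA h
  · simp at h

/-- Direction I of the main theorem: a valid formula has property C of some order. -/
theorem hasC_of_valid {A : Fm} (hrect : A.rectified) (hvalid : A.valid) :
    ∃ n : ℕ, 0 < n ∧ A.hasC n := by
  by_contra hc
  push_neg at hc
  set F := A.outerSk with hF
  -- the default element of the term domain
  obtain ⟨t₀, ht₀⟩ := champTm_nonempty F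
  have hd₀ : LangOK F t₀ := champTm_sound F 2 t₀ ht₀
  set d₀ : TD F := ⟨t₀, hd₀⟩ with hd
  -- the falsifying valuations
  have hS : ∀ m : ℕ, ∃ β : ℕ → List Tm → Bool,
      (F.expandL (F.champTm (m+2))).sentEval β = false := by
    intro m
    have := hc (m+2) (by omega)
    rw [Fm.hasC, if_neg (by omega)] at this
    rw [Fm.taut] at this
    push_neg at this
    obtain ⟨β, hβ⟩ := this Fm.qf_expandL
    exact ⟨β, by simpa using hβ⟩
  set S : ℕ → Set (ℕ → List Tm → Bool) :=
    fun m => {β | (F.expandL (F.champTm (m+2))).sentEval β = false} with hSdef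
  have hdec : ∀ m, S (m+1) ⊆ S m := by
    intro m β hβ
    show (F.expandL (F.champTm (m+2))).sentEval β = false
    by_contra hne
    have htrue : (F.expandL (F.champTm (m+2))).sentEval β = true := by
      cases h : (F.expandL (F.champTm (m+2))).sentEval β
      · exact absurd h hne
      · rfl
    have hholds := (sentEval_expand_iff (d₀ := d₀)).1 htrue
    have hmono := (Fm.expandL_mono (champTm_subset F (by omega : m + 2 ≤ m + 3)) true
      (Fm.exOnly_skolemize A true []) (vcan F d₀)).1 rfl hholds
    have := (sentEval_expand_iff (d₀ := d₀)).2 hmono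
    rw [hβ] at this
    cases this
  have hcl : ∀ m, IsClosed (S m) := by
    intro m
    have : S m = (fun β : ℕ → List Tm → Bool =>
        (F.expandL (F.champTm (m+2))).sentEval β) ⁻¹' {false} := by
      ext β; simp [hSdef]
    rw [this]
    exact IsClosed.preimage (continuous_sentEval _) (isClosed_discrete _)
  have hne : ∀ m, (S m).Nonempty := by
    intro m
    obtain ⟨β, hβ⟩ := hS m
    exact ⟨β, hβ⟩
  have hinter := IsCompact.nonempty_iInter_of_sequence_nonempty_isCompact_isClosed
    S hdec hne (IsClosed.isCompact (hcl 0)) hcl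
  obtain ⟨β, hβ⟩ := hinter
  simp only [Set.mem_iInter] at hβ
  -- F fails in the term model
  have hFfail : ¬ F.holds (termInterp F β d₀) (vcan F d₀) := by
    intro hFholds
    obtain ⟨m, hm2, hmh⟩ := (holds_term_expand true (Fm.exOnly_skolemize A true [])
      (rect_outerSk hrect) (vcan F d₀) (fun z _ => rfl)).1 rfl hFholds
    have := (sentEval_expand_iff (d₀ := d₀)).2 hmh
    have hfalse := hβ (m - 2)
    rw [hSdef] at hfalse
    simp only [Set.mem_setOf_eq] at hfalse
    rw [show m - 2 + 2 = m from by omega] at hfalse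
    rw [this] at hfalse
    cases hfalse
  -- hence A fails in the term model
  have hAfail : ¬ A.holds (termInterp F β d₀) (vcan F d₀) := by
    intro hA
    exact hFfail (Fm.holds_outerSk hrect.1 hA)
  exact hAfail (hvalid _ ⟨d₀⟩ _ _)

/-- Remove all outermost universaloid quantifiers, replacing their variables by
Skolem terms. -/
def Fm.step : Fm → Bool → List ℕ → Fm
  | .atom p ts, _, _ => .atom p ts
  | .neg A, b, γs => .neg (A.step (!b) γs)
  | .or A B, b, γs => .or (A.step b γs) (B.step b γs)
  | .and A B, b, γs => .and (A.step b γs) (B.step b γs)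
  | .all x A, b, γs => if b then Fm.subst x (skTm x γs) A else .all x (A.step b (γs ++ [x]))
  | .ex x A, b, γs => if b then .ex x (A.step b (γs ++ [x])) else Fm.subst x (skTm x γs) A


@[simp] theorem Fm.step_atom (p ts b γs) : (Fm.atom p ts).step b γs = .atom p ts := rfl
@[simp] theorem Fm.step_neg (A : Fm) (b γs) : (Fm.neg A).step b γs = .neg (A.step (!b) γs) := rfl
@[simp] theorem Fm.step_or (A B : Fm) (b γs) :
    (Fm.or A B).step b γs = .or (A.step b γs) (B.step b γs) := rfl
@[simp] theorem Fm.step_and (A B : Fm) (b γs) :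
    (Fm.and A B).step b γs = .and (A.step b γs) (B.step b γs) := rfl
@[simp] theorem Fm.step_all_true (x) (A : Fm) (γs) :
    (Fm.all x A).step true γs = Fm.subst x (skTm x γs) A := rfl
@[simp] theorem Fm.step_all_false (x) (A : Fm) (γs) :
    (Fm.all x A).step false γs = .all x (A.step false (γs ++ [x])) := rfl
@[simp] theorem Fm.step_ex_true (x) (A : Fm) (γs) :
    (Fm.ex x A).step true γs = .ex x (A.step true (γs ++ [x])) := rfl
@[simp] theorem Fm.step_ex_false (x) (A : Fm) (γs) :
    (Fm.ex x A).step false γs = Fm.subst x (skTm x γs) A := rfl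

/-- Maximal nesting depth of universaloid quantifiers. -/
def Fm.uDepth : Fm → Bool → ℕ
  | .atom _ _, _ => 0
  | .neg A, b => A.uDepth (!b)
  | .or A B, b => max (A.uDepth b) (B.uDepth b)
  | .and A B, b => max (A.uDepth b) (B.uDepth b)
  | .all _ A, b => if b then A.uDepth b + 1 else A.uDepth b
  | .ex _ A, b => if b then A.uDepth b else A.uDepth b + 1


@[simp] theorem Fm.uDepth_atom (p ts b) : (Fm.atom p ts).uDepth b = 0 := rfl
@[simp] theorem Fm.uDepth_neg (A : Fm) (b) : (Fm.neg A).uDepth b = A.uDepth (!b) := rfl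
@[simp] theorem Fm.uDepth_or (A B : Fm) (b) :
    (Fm.or A B).uDepth b = max (A.uDepth b) (B.uDepth b) := rfl
@[simp] theorem Fm.uDepth_and (A B : Fm) (b) :
    (Fm.and A B).uDepth b = max (A.uDepth b) (B.uDepth b) := rfl
@[simp] theorem Fm.uDepth_all_true (x) (A : Fm) :
    (Fm.all x A).uDepth true = A.uDepth true + 1 := rfl
@[simp] theorem Fm.uDepth_all_false (x) (A : Fm) :
    (Fm.all x A).uDepth false = A.uDepth false := rfl
@[simp] theorem Fm.uDepth_ex_true (x) (A : Fm) :
    (Fm.ex x A).uDepth true = A.uDepth true := rfl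
@[simp] theorem Fm.uDepth_ex_false (x) (A : Fm) :
    (Fm.ex x A).uDepth false = A.uDepth false + 1 := rfl

theorem Fm.uDepth_subst (x : ℕ) (u : Tm) (C : Fm) (b : Bool) :
    (Fm.subst x u C).uDepth b = C.uDepth b := by
  induction C generalizing b with
  | atom p ts => rfl
  | neg A ih => simp [Fm.subst, Fm.uDepth, ih]
  | or A B ihA ihB => simp [Fm.subst, Fm.uDepth, ihA, ihB]
  | and A B ihA ihB => simp [Fm.subst, Fm.uDepth, ihA, ihB]
  | all y A ih =>
    by_cases h : y = x <;> simp [Fm.subst, h, Fm.uDepth, ih]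
  | ex y A ih =>
    by_cases h : y = x <;> simp [Fm.subst, h, Fm.uDepth, ih]

theorem Fm.skolemize_of_uDepth_zero {C : Fm} :
    ∀ {b : Bool} (γs : List ℕ), C.uDepth b = 0 → C.skolemize b γs = C := by
  induction C with
  | atom p ts => intro b γs _; simp
  | neg A ih => intro b γs h; simp only [Fm.skolemize_neg, ih γs h, Fm.uDepth] at *
  | or A B ihA ihB =>
    intro b γs h
    simp only [Fm.uDepth, Nat.max_eq_zero_iff] at h
    simp [ihA γs h.1, ihB γs h.2]
  | and A B ihA ihB =>
    intro b γs h
    simp only [Fm.uDepth, Nat.max_eq_zero_iff] at h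
    simp [ihA γs h.1, ihB γs h.2]
  | all x A ih =>
    intro b γs h
    cases b with
    | true => simp at h
    | false =>
      rw [Fm.uDepth_all_false] at h
      rw [Fm.skolemize_all, if_neg (by simp), ih (γs ++ [x]) h]
  | ex x A ih =>
    intro b γs h
    cases b with
    | true =>
      rw [Fm.uDepth_ex_true] at h
      rw [Fm.skolemize_ex, if_pos rfl, ih (γs ++ [x]) h]
    | false => simp at h

theorem Fm.step_of_uDepth_zero {C : Fm} :
    ∀ {b : Bool} (γs : List ℕ), C.uDepth b = 0 → C.step b γs = C := by
  induction C with
  | atom p ts => intro b γs _; rfl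
  | neg A ih => intro b γs h; simp only [Fm.step, ih γs h]
  | or A B ihA ihB =>
    intro b γs h
    simp only [Fm.uDepth, Nat.max_eq_zero_iff] at h
    simp only [Fm.step, ihA γs h.1, ihB γs h.2]
  | and A B ihA ihB =>
    intro b γs h
    simp only [Fm.uDepth, Nat.max_eq_zero_iff] at h
    simp only [Fm.step, ihA γs h.1, ihB γs h.2]
  | all x A ih =>
    intro b γs h
    cases b with
    | true => simp at h
    | false =>
      rw [Fm.uDepth_all_false] at h
      rw [Fm.step_all_false, ih (γs ++ [x]) h]
  | ex x A ih =>
    intro b γs h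
    cases b with
    | true =>
      rw [Fm.uDepth_ex_true] at h
      rw [Fm.step_ex_true, ih (γs ++ [x]) h]
    | false => simp at h

theorem Fm.uDepth_step {C : Fm} :
    ∀ {b : Bool} (γs : List ℕ) {k : ℕ}, C.uDepth b ≤ k + 1 → (C.step b γs).uDepth b ≤ k := by
  induction C with
  | atom p ts => intro b γs k _; exact Nat.zero_le k
  | neg A ih => intro b γs k h; exact ih γs h
  | or A B ihA ihB =>
    intro b γs k h
    simp only [Fm.uDepth, max_le_iff] at h ⊢
    exact max_le (ihA γs h.1) (ihB γs h.2)
  | and A B ihA ihB =>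
    intro b γs k h
    simp only [Fm.uDepth, max_le_iff] at h ⊢
    exact max_le (ihA γs h.1) (ihB γs h.2)
  | all x A ih =>
    intro b γs k h
    cases b with
    | true =>
      rw [Fm.uDepth_all_true] at h
      rw [Fm.step_all_true, Fm.uDepth_subst]
      omega
    | false =>
      rw [Fm.uDepth_all_false] at h
      rw [Fm.step_all_false, Fm.uDepth_all_false]
      exact ih (γs ++ [x]) h
  | ex x A ih =>
    intro b γs k h
    cases b with
    | true =>
      rw [Fm.uDepth_ex_true] at h
      rw [Fm.step_ex_true, Fm.uDepth_ex_true]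
      exact ih (γs ++ [x]) h
    | false =>
      rw [Fm.uDepth_ex_false] at h
      rw [Fm.step_ex_false, Fm.uDepth_subst]
      omega

/-- Substitution commutes with Skolemization. -/
theorem Fm.skolemize_subst {x : ℕ} {t : Tm} {C : Fm} :
    ∀ {b : Bool} {γs : List ℕ}, x ∉ C.boundVars → (∀ z ∈ t.varsT, z ∉ C.boundVars) →
      x ∉ γs → (Fm.subst x t C).skolemize b γs = Fm.subst x t (C.skolemize b γs) := by
  induction C with
  | atom p ts => intro b γs _ _ _; simp [Fm.subst]
  | neg A ih =>
    intro b γs hx ht hγ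
    simp only [Fm.subst, Fm.skolemize_neg, ih hx ht hγ]
  | or A B ihA ihB =>
    intro b γs hx ht hγ
    simp only [Fm.boundVars, List.mem_append] at hx ht
    simp only [Fm.subst, Fm.skolemize_or,
      ihA (fun h => hx (Or.inl h)) (fun z hz h => ht z hz (Or.inl h)) hγ,
      ihB (fun h => hx (Or.inr h)) (fun z hz h => ht z hz (Or.inr h)) hγ]
  | and A B ihA ihB =>
    intro b γs hx ht hγ
    simp only [Fm.boundVars, List.mem_append] at hx ht
    simp only [Fm.subst, Fm.skolemize_and,
      ihA (fun h => hx (Or.inl h)) (fun z hz h => ht z hz (Or.inl h)) hγ,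
      ihB (fun h => hx (Or.inr h)) (fun z hz h => ht z hz (Or.inr h)) hγ]
  | all y A ih =>
    intro b γs hx ht hγ
    simp only [Fm.boundVars, List.mem_cons] at hx ht
    have hyx : ¬ (y = x) := fun h => hx (Or.inl h.symm)
    have hxA : x ∉ A.boundVars := fun h => hx (Or.inr h)
    have htA : ∀ z ∈ t.varsT, z ∉ A.boundVars := fun z hz h => ht z hz (Or.inr h)
    rw [Fm.subst, if_neg hyx]
    cases b with
    | true =>
      rw [Fm.skolemize_all, if_pos rfl, Fm.skolemize_all, if_pos rfl]
      rw [ih hxA htA hγ]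
      refine (Fm.subst_comm (fun h => hyx h.symm) ?_ ?_ _).symm
      · intro h; exact ht y h (Or.inl rfl)
      · rw [skTm_varsT]; exact hγ
    | false =>
      rw [Fm.skolemize_all, if_neg (by simp), Fm.skolemize_all, if_neg (by simp)]
      have hγ' : x ∉ γs ++ [y] := by
        intro h
        rcases List.mem_append.1 h with h' | h'
        · exact hγ h'
        · exact hyx ((show x = y by simpa using h')).symm
      rw [ih hxA htA hγ', Fm.subst, if_neg hyx]
  | ex y A ih =>
    intro b γs hx ht hγ
    simp only [Fm.boundVars, List.mem_cons] at hx ht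
    have hyx : ¬ (y = x) := fun h => hx (Or.inl h.symm)
    have hxA : x ∉ A.boundVars := fun h => hx (Or.inr h)
    have htA : ∀ z ∈ t.varsT, z ∉ A.boundVars := fun z hz h => ht z hz (Or.inr h)
    rw [Fm.subst, if_neg hyx]
    cases b with
    | false =>
      rw [Fm.skolemize_ex, if_neg (by simp), Fm.skolemize_ex, if_neg (by simp)]
      rw [ih hxA htA hγ]
      refine (Fm.subst_comm (fun h => hyx h.symm) ?_ ?_ _).symm
      · intro h; exact ht y h (Or.inl rfl)
      · rw [skTm_varsT]; exact hγ
    | true =>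
      rw [Fm.skolemize_ex, if_pos rfl, Fm.skolemize_ex, if_pos rfl]
      have hγ' : x ∉ γs ++ [y] := by
        intro h
        rcases List.mem_append.1 h with h' | h'
        · exact hγ h'
        · exact hyx ((show x = y by simpa using h')).symm
      rw [ih hxA htA hγ', Fm.subst, if_neg hyx]

/-- The `step` function preserves the outer Skolemized form. -/
theorem Fm.skolemize_step {C : Fm} :
    ∀ {b : Bool} {γs : List ℕ}, C.boundVars.Nodup → (∀ z ∈ γs, z ∉ C.boundVars) →
      (C.step b γs).skolemize b γs = C.skolemize b γs := by
  induction C with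
  | atom p ts => intro b γs _ _; rfl
  | neg A ih => intro b γs h1 h2; simp only [Fm.step, Fm.skolemize_neg, ih h1 h2]
  | or A B ihA ihB =>
    intro b γs h1 h2
    simp only [Fm.boundVars, List.nodup_append] at h1
    simp only [Fm.boundVars, List.mem_append] at h2
    simp only [Fm.step, Fm.skolemize_or,
      ihA h1.1 (fun z hz h => h2 z hz (Or.inl h)),
      ihB h1.2.1 (fun z hz h => h2 z hz (Or.inr h))]
  | and A B ihA ihB =>
    intro b γs h1 h2
    simp only [Fm.boundVars, List.nodup_append] at h1
    simp only [Fm.boundVars, List.mem_append] at h2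
    simp only [Fm.step, Fm.skolemize_and,
      ihA h1.1 (fun z hz h => h2 z hz (Or.inl h)),
      ihB h1.2.1 (fun z hz h => h2 z hz (Or.inr h))]
  | all x A ih =>
    intro b γs h1 h2
    simp only [Fm.boundVars, List.nodup_cons] at h1
    cases b with
    | true =>
      rw [Fm.step_all_true]
      rw [Fm.skolemize_all, if_pos rfl]
      refine Fm.skolemize_subst h1.1 ?_ ?_
      · intro z hz
        rw [skTm_varsT] at hz
        exact fun h => h2 z hz (by simp [Fm.boundVars, h])
      · exact fun h => h2 x h (by simp [Fm.boundVars])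
    | false =>
      rw [Fm.step_all_false]
      rw [Fm.skolemize_all, if_neg (by simp), Fm.skolemize_all, if_neg (by simp)]
      have h2' : ∀ z ∈ γs ++ [x], z ∉ A.boundVars := by
        intro z hz
        rcases List.mem_append.1 hz with h' | h'
        · exact fun h => h2 z h' (by simp [Fm.boundVars, h])
        · have : z = x := by simpa using h'
          exact this ▸ h1.1
      rw [ih h1.2 h2']
  | ex x A ih =>
    intro b γs h1 h2
    simp only [Fm.boundVars, List.nodup_cons] at h1
    cases b with
    | false =>
      rw [Fm.step_ex_false]
      rw [Fm.skolemize_ex, if_neg (by simp)]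
      refine Fm.skolemize_subst h1.1 ?_ ?_
      · intro z hz
        rw [skTm_varsT] at hz
        exact fun h => h2 z hz (by simp [Fm.boundVars, h])
      · exact fun h => h2 x h (by simp [Fm.boundVars])
    | true =>
      rw [Fm.step_ex_true]
      rw [Fm.skolemize_ex, if_pos rfl, Fm.skolemize_ex, if_pos rfl]
      have h2' : ∀ z ∈ γs ++ [x], z ∉ A.boundVars := by
        intro z hz
        rcases List.mem_append.1 hz with h' | h'
        · exact fun h => h2 z h' (by simp [Fm.boundVars, h])
        · have : z = x := by simpa using h'
          exact this ▸ h1.1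
      rw [ih h1.2 h2']

theorem Fm.boundVars_step (b γs) (C : Fm) :
    (C.step b γs).boundVars.Sublist C.boundVars := by
  induction C generalizing b γs with
  | atom p ts => simp [Fm.step]
  | neg A ih => simpa [Fm.step, Fm.boundVars] using ih (!b) γs
  | or A B ihA ihB =>
    simpa [Fm.step, Fm.boundVars] using List.Sublist.append (ihA b γs) (ihB b γs)
  | and A B ihA ihB =>
    simpa [Fm.step, Fm.boundVars] using List.Sublist.append (ihA b γs) (ihB b γs)
  | all x A ih =>
    cases b with
    | true =>
      rw [Fm.step_all_true, Fm.boundVars_subst]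
      exact List.sublist_cons_self _ _
    | false =>
      rw [Fm.step_all_false]
      exact List.Sublist.cons₂ _ (ih false (γs ++ [x]))
  | ex x A ih =>
    cases b with
    | true =>
      rw [Fm.step_ex_true]
      exact List.Sublist.cons₂ _ (ih true (γs ++ [x]))
    | false =>
      rw [Fm.step_ex_false, Fm.boundVars_subst]
      exact List.sublist_cons_self _ _

theorem Fm.freeVars_step {C : Fm} :
    ∀ {b γs}, ∀ z ∈ (C.step b γs).freeVars, z ∈ C.freeVars ∨ z ∈ γs := by
  induction C with
  | atom p ts => intro b γs z hz; left; exact hz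
  | neg A ih => intro b γs z hz; exact ih z hz
  | or A B ihA ihB =>
    intro b γs z hz
    simp only [Fm.step, Fm.freeVars, List.mem_append] at hz ⊢
    rcases hz with h | h
    · rcases ihA z h with h' | h'; exacts [Or.inl (Or.inl h'), Or.inr h']
    · rcases ihB z h with h' | h'; exacts [Or.inl (Or.inr h'), Or.inr h']
  | and A B ihA ihB =>
    intro b γs z hz
    simp only [Fm.step, Fm.freeVars, List.mem_append] at hz ⊢
    rcases hz with h | h
    · rcases ihA z h with h' | h'; exacts [Or.inl (Or.inl h'), Or.inr h']
    · rcases ihB z h with h' | h'; exacts [Or.inl (Or.inr h'), Or.inr h']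
  | all x A ih =>
    intro b γs z hz
    cases b with
    | true =>
      rw [Fm.step_all_true] at hz
      rcases Fm.freeVars_subst z hz with ⟨h1, h2⟩ | h
      · left; simp [Fm.freeVars, List.mem_filter, h1, h2]
      · right; simpa using h
    | false =>
      rw [Fm.step_all_false] at hz
      simp only [Fm.freeVars, List.mem_filter, decide_eq_true_eq] at hz
      rcases ih z hz.1 with h' | h'
      · left; simp [Fm.freeVars, List.mem_filter, h', hz.2]
      · rcases List.mem_append.1 h' with h'' | h''
        · right; exact h''
        · exact absurd (by simpa using h'') hz.2
  | ex x A ih =>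
    intro b γs z hz
    cases b with
    | false =>
      rw [Fm.step_ex_false] at hz
      rcases Fm.freeVars_subst z hz with ⟨h1, h2⟩ | h
      · left; simp [Fm.freeVars, List.mem_filter, h1, h2]
      · right; simpa using h
    | true =>
      rw [Fm.step_ex_true] at hz
      simp only [Fm.freeVars, List.mem_filter, decide_eq_true_eq] at hz
      rcases ih z hz.1 with h' | h'
      · left; simp [Fm.freeVars, List.mem_filter, h', hz.2]
      · rcases List.mem_append.1 h' with h'' | h''
        · right; exact h''
        · exact absurd (by simpa using h'') hz.2

@[simp] theorem skTm_symsT (x : ℕ) (γs : List ℕ) :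
    (skTm x γs).symsT = [(some (Sum.inr x), γs.length)] := by
  simp only [skTm, Tm.symsT_fn, List.length_map]
  congr 1
  induction γs with
  | nil => rfl
  | cons a l ih => simpa using ih

theorem Fm.symsF_step {C : Fm} :
    ∀ {b γs}, C.boundVars.Nodup →
      ∀ p ∈ (C.step b γs).symsF, p ∈ C.symsF ∨
        ∃ x, p.1 = some (Sum.inr x) ∧ x ∈ C.boundVars ∧ x ∉ (C.step b γs).boundVars := by
  induction C with
  | atom q ts => intro b γs _ p hp; left; exact hp
  | neg A ih => intro b γs hn p hp; exact ih hn p hp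
  | or A B ihA ihB =>
    intro b γs hn p hp
    simp only [Fm.boundVars, List.nodup_append] at hn
    simp only [Fm.step, Fm.symsF, List.mem_append] at hp
    rcases hp with h | h
    · rcases ihA hn.1 p h with h' | ⟨x, hx1, hx2, hx3⟩
      · left; simp [Fm.symsF, h']
      · refine Or.inr ⟨x, hx1, by simp [Fm.boundVars, hx2], ?_⟩
        simp only [Fm.step, Fm.boundVars, List.mem_append]
        rintro (h'' | h'')
        · exact hx3 h''
        · exact hn.2.2 _ hx2 _ ((Fm.boundVars_step b γs B).mem h'') rfl
    · rcases ihB hn.2.1 p h with h' | ⟨x, hx1, hx2, hx3⟩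
      · left; simp [Fm.symsF, h']
      · refine Or.inr ⟨x, hx1, by simp [Fm.boundVars, hx2], ?_⟩
        simp only [Fm.step, Fm.boundVars, List.mem_append]
        rintro (h'' | h'')
        · exact hn.2.2 _ ((Fm.boundVars_step b γs A).mem h'') _ hx2 rfl
        · exact hx3 h''
  | and A B ihA ihB =>
    intro b γs hn p hp
    simp only [Fm.boundVars, List.nodup_append] at hn
    simp only [Fm.step, Fm.symsF, List.mem_append] at hp
    rcases hp with h | h
    · rcases ihA hn.1 p h with h' | ⟨x, hx1, hx2, hx3⟩
      · left; simp [Fm.symsF, h']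
      · refine Or.inr ⟨x, hx1, by simp [Fm.boundVars, hx2], ?_⟩
        simp only [Fm.step, Fm.boundVars, List.mem_append]
        rintro (h'' | h'')
        · exact hx3 h''
        · exact hn.2.2 _ hx2 _ ((Fm.boundVars_step b γs B).mem h'') rfl
    · rcases ihB hn.2.1 p h with h' | ⟨x, hx1, hx2, hx3⟩
      · left; simp [Fm.symsF, h']
      · refine Or.inr ⟨x, hx1, by simp [Fm.boundVars, hx2], ?_⟩
        simp only [Fm.step, Fm.boundVars, List.mem_append]
        rintro (h'' | h'')
        · exact hn.2.2 _ ((Fm.boundVars_step b γs A).mem h'') _ hx2 rfl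
        · exact hx3 h''
  | all x A ih =>
    intro b γs hn p hp
    simp only [Fm.boundVars, List.nodup_cons] at hn
    cases b with
    | true =>
      rw [Fm.step_all_true] at hp ⊢
      rcases Fm.symsF_subst p hp with h | h
      · left; exact h
      · rw [skTm_symsT] at h
        simp only [List.mem_singleton] at h
        refine Or.inr ⟨x, by simp [h], by simp [Fm.boundVars], ?_⟩
        rw [Fm.boundVars_subst]
        exact hn.1
    | false =>
      rw [Fm.step_all_false] at hp ⊢
      rw [show (Fm.all x (A.step false (γs ++ [x]))).symsF = (A.step false (γs ++ [x])).symsF from rfl] at hp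
      rcases ih hn.2 p hp with h | ⟨y, hy1, hy2, hy3⟩
      · left; exact h
      · refine Or.inr ⟨y, hy1, by simp [Fm.boundVars, hy2], ?_⟩
        simp only [Fm.boundVars, List.mem_cons]
        rintro (h'' | h'')
        · exact hn.1 (h'' ▸ hy2)
        · exact hy3 h''
  | ex x A ih =>
    intro b γs hn p hp
    simp only [Fm.boundVars, List.nodup_cons] at hn
    cases b with
    | false =>
      rw [Fm.step_ex_false] at hp ⊢
      rcases Fm.symsF_subst p hp with h | h
      · left; exact h
      · rw [skTm_symsT] at h
        simp only [List.mem_singleton] at h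
        refine Or.inr ⟨x, by simp [h], by simp [Fm.boundVars], ?_⟩
        rw [Fm.boundVars_subst]
        exact hn.1
    | true =>
      rw [Fm.step_ex_true] at hp ⊢
      rw [show (Fm.ex x (A.step true (γs ++ [x]))).symsF = (A.step true (γs ++ [x])).symsF from rfl] at hp
      rcases ih hn.2 p hp with h | ⟨y, hy1, hy2, hy3⟩
      · left; exact h
      · refine Or.inr ⟨y, hy1, by simp [Fm.boundVars, hy2], ?_⟩
        simp only [Fm.boundVars, List.mem_cons]
        rintro (h'' | h'')
        · exact hn.1 (h'' ▸ hy2)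
        · exact hy3 h''

/-- `I'` differs from `I` at most in the functions interpreting the Skolem
symbols of the variables in `L`. -/
def DiffOnly {D : Type} (I I' : Interp D) (L : List ℕ) : Prop :=
  I'.prd = I.prd ∧ ∀ s : FSym, I'.fns s ≠ I.fns s → ∃ u ∈ L, s = some (Sum.inr u)

open Classical in
noncomputable def mergeI {D : Type} (I₁ I₂ I : Interp D) (LA : List ℕ) : Interp D :=
  ⟨fun s => if ∃ u ∈ LA, s = some (Sum.inr u) then I₁.fns s else I₂.fns s, I.prd⟩

theorem mergeI_fns {D : Type} (I₁ I₂ I : Interp D) (LA : List ℕ) (s : FSym) :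
    (mergeI I₁ I₂ I LA).fns s =
      (if ∃ u ∈ LA, s = some (Sum.inr u) then I₁.fns s else I₂.fns s) := rfl

theorem mergeI_prd {D : Type} (I₁ I₂ I : Interp D) (LA : List ℕ) :
    (mergeI I₁ I₂ I LA).prd = I.prd := rfl

/-- Extension of an interpretation at a single Skolem symbol. -/
def extI {D : Type} (I : Interp D) (x : ℕ) (e : List D → D) : Interp D :=
  ⟨Function.update I.fns (some (Sum.inr x)) e, I.prd⟩

theorem extI_fns {D : Type} (I : Interp D) (x : ℕ) (e : List D → D) :
    (extI I x e).fns = Function.update I.fns (some (Sum.inr x)) e := rfl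

theorem extI_prd {D : Type} (I : Interp D) (x : ℕ) (e : List D → D) :
    (extI I x e).prd = I.prd := rfl

theorem diffOnly_mergeI {D : Type} {I I₁ I₂ : Interp D} {LA LB : List ℕ}
    (hd₁ : DiffOnly I I₁ LA) (hd₂ : DiffOnly I I₂ LB) :
    DiffOnly I (mergeI I₁ I₂ I LA) (LA ++ LB) := by
  refine ⟨rfl, fun s hs => ?_⟩
  rw [mergeI_fns] at hs
  by_cases hc : ∃ u ∈ LA, s = some (Sum.inr u)
  · rw [if_pos hc] at hs
    obtain ⟨u, hu, hsu⟩ := hd₁.2 s hs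
    exact ⟨u, by simp [hu], hsu⟩
  · rw [if_neg hc] at hs
    obtain ⟨u, hu, hsu⟩ := hd₂.2 s hs
    exact ⟨u, by simp [hu], hsu⟩

theorem mergeI_left {D : Type} {I I₁ I₂ : Interp D} {LA LB : List ℕ}
    (hd₁ : DiffOnly I I₁ LA) (hd₂ : DiffOnly I I₂ LB) {X : Fm} {w : ℕ → D}
    (hX : ∀ p ∈ X.symsF, ∀ u, p.1 = some (Sum.inr u) → u ∉ LB ∨ u ∈ LA) :
    X.holds (mergeI I₁ I₂ I LA) w ↔ X.holds I₁ w := by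
  refine Fm.holds_ext ?_ ?_
  · rw [mergeI_prd, hd₁.1]
  intro p hp
  rw [mergeI_fns]
  by_cases hc : ∃ u ∈ LA, p.1 = some (Sum.inr u)
  · rw [if_pos hc]
  · rw [if_neg hc]
    have h2 : I₂.fns p.1 = I.fns p.1 := by
      by_contra hne
      obtain ⟨u, hu, hsu⟩ := hd₂.2 p.1 hne
      rcases hX p hp u hsu with h | h
      · exact h hu
      · exact hc ⟨u, h, hsu⟩
    have h1 : I₁.fns p.1 = I.fns p.1 := by
      by_contra hne
      obtain ⟨u, hu, hsu⟩ := hd₁.2 p.1 hne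
      exact hc ⟨u, hu, hsu⟩
    rw [h2, h1]

theorem mergeI_right {D : Type} {I I₁ I₂ : Interp D} {LA LB : List ℕ}
    (hd₁ : DiffOnly I I₁ LA) (hd₂ : DiffOnly I I₂ LB) {X : Fm} {w : ℕ → D}
    (hX : ∀ p ∈ X.symsF, ∀ u, p.1 = some (Sum.inr u) → u ∉ LA) :
    X.holds (mergeI I₁ I₂ I LA) w ↔ X.holds I₂ w := by
  refine Fm.holds_ext ?_ ?_
  · rw [mergeI_prd, hd₂.1]
  intro p hp
  rw [mergeI_fns, if_neg]
  rintro ⟨u, hu, hsu⟩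
  exact hX p hp u hsu hu

/-- Update of a valuation along a list of variables and values. -/
noncomputable def updL {D : Type} (v : ℕ → D) (γs : List ℕ) (ds : List D) : ℕ → D :=
  fun z => if z ∈ γs then ds.getD (γs.idxOf z) (v z) else v z

theorem updL_map {D : Type} (v w : ℕ → D) (γs : List ℕ)
    (hw : ∀ z, z ∉ γs → w z = v z) : updL v γs (γs.map w) = w := by
  funext z
  rw [updL]
  by_cases h : z ∈ γs
  · rw [if_pos h]
    have hlt : γs.idxOf z < γs.length := List.idxOf_lt_length_iff.2 h
    rw [List.getD_eq_getElem _ _ (by simpa using hlt), List.getElem_map]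
    congr 1
    exact List.getElem_idxOf hlt
  · rw [if_neg h]
    exact (hw z h).symm

/-- The one-step Skolemization is sound: the Skolem functions introduced for the
outermost universaloid quantifiers can be interpreted (as counterexample choice
functions) so that the stepped formula implies (at positive polarity; is implied
by, at negative polarity) the original one. -/
theorem step_sound {D : Type} [Nonempty D] (I : Interp D) (v : ℕ → D) :
    ∀ (G : Fm) (b : Bool) (γs : List ℕ),
      G.boundVars.Nodup →
      (∀ z ∈ γs, z ∉ G.boundVars) →
      (∀ p ∈ G.symsF, ∀ u, p.1 = some (Sum.inr u) → u ∉ G.boundVars) →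
      ∃ I' : Interp D, DiffOnly I I' G.boundVars ∧
        ∀ w : ℕ → D, (∀ z, z ∉ γs → w z = v z) →
          (b = true → (G.step b γs).holds I' w → G.holds I w) ∧
          (b = false → G.holds I w → (G.step b γs).holds I' w) := by
  intro G
  induction G with
  | atom p ts =>
    intro b γs _ _ _
    refine ⟨I, ⟨rfl, fun s hs => absurd rfl hs⟩, fun w hw => ?_⟩
    constructor <;> intro _ h <;> simpa using h
  | neg A ih =>
    intro b γs hN hγ hfr
    obtain ⟨I₁, hd₁, htr₁⟩ := ih (!b) γs hN hγ hfr
    refine ⟨I₁, hd₁, fun w hw => ?_⟩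
    constructor
    · rintro rfl h
      simp only [Fm.step_neg, Fm.holds_neg] at h ⊢
      exact fun hh => h ((htr₁ w hw).2 rfl hh)
    · rintro rfl h
      simp only [Fm.step_neg, Fm.holds_neg] at h ⊢
      exact fun hh => h ((htr₁ w hw).1 rfl hh)
  | or A B ihA ihB =>
    intro b γs hN hγ hfr
    simp only [Fm.boundVars, List.nodup_append] at hN
    have hγA : ∀ z ∈ γs, z ∉ A.boundVars := fun z hz h => hγ z hz (by simp [Fm.boundVars, h])
    have hγB : ∀ z ∈ γs, z ∉ B.boundVars := fun z hz h => hγ z hz (by simp [Fm.boundVars, h])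
    have hfrA : ∀ p ∈ A.symsF, ∀ u, p.1 = some (Sum.inr u) → u ∉ A.boundVars :=
      fun p hp u hu h => hfr p (by simp [Fm.symsF, hp]) u hu (by simp [Fm.boundVars, h])
    have hfrB : ∀ p ∈ B.symsF, ∀ u, p.1 = some (Sum.inr u) → u ∉ B.boundVars :=
      fun p hp u hu h => hfr p (by simp [Fm.symsF, hp]) u hu (by simp [Fm.boundVars, h])
    obtain ⟨I₁, hd₁, htr₁⟩ := ihA b γs hN.1 hγA hfrA
    obtain ⟨I₂, hd₂, htr₂⟩ := ihB b γs hN.2.1 hγB hfrB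
    have hXA : ∀ p ∈ (A.step b γs).symsF, ∀ u, p.1 = some (Sum.inr u) →
        u ∉ B.boundVars ∨ u ∈ A.boundVars := by
      intro p hp u hu
      rcases Fm.symsF_step hN.1 p hp with h | ⟨x, hx1, hx2, _⟩
      · left
        intro hB
        exact hfr p (by simp [Fm.symsF, h]) u hu (by simp [Fm.boundVars, hB])
      · right
        have : u = x := by rw [hu] at hx1; simpa using hx1
        exact this ▸ hx2
    have hXB : ∀ p ∈ (B.step b γs).symsF, ∀ u, p.1 = some (Sum.inr u) →
        u ∉ A.boundVars := by
      intro p hp u hu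
      rcases Fm.symsF_step hN.2.1 p hp with h | ⟨x, hx1, hx2, _⟩
      · intro hA
        exact hfr p (by simp [Fm.symsF, h]) u hu (by simp [Fm.boundVars, hA])
      · have : u = x := by rw [hu] at hx1; simpa using hx1
        subst this
        exact fun hA => hN.2.2 _ hA _ hx2 rfl
    refine ⟨mergeI I₁ I₂ I A.boundVars, by simpa [Fm.boundVars] using diffOnly_mergeI hd₁ hd₂,
      fun w hw => ?_⟩
    constructor
    · rintro rfl h
      simp only [Fm.step_or, Fm.holds_or] at h ⊢
      rcases h with h | h
      · exact Or.inl ((htr₁ w hw).1 rfl ((mergeI_left hd₁ hd₂ hXA).1 h))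
      · exact Or.inr ((htr₂ w hw).1 rfl ((mergeI_right hd₁ hd₂ hXB).1 h))
    · rintro rfl h
      simp only [Fm.step_or, Fm.holds_or] at h ⊢
      rcases h with h | h
      · exact Or.inl ((mergeI_left hd₁ hd₂ hXA).2 ((htr₁ w hw).2 rfl h))
      · exact Or.inr ((mergeI_right hd₁ hd₂ hXB).2 ((htr₂ w hw).2 rfl h))
  | and A B ihA ihB =>
    intro b γs hN hγ hfr
    simp only [Fm.boundVars, List.nodup_append] at hN
    have hγA : ∀ z ∈ γs, z ∉ A.boundVars := fun z hz h => hγ z hz (by simp [Fm.boundVars, h])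
    have hγB : ∀ z ∈ γs, z ∉ B.boundVars := fun z hz h => hγ z hz (by simp [Fm.boundVars, h])
    have hfrA : ∀ p ∈ A.symsF, ∀ u, p.1 = some (Sum.inr u) → u ∉ A.boundVars :=
      fun p hp u hu h => hfr p (by simp [Fm.symsF, hp]) u hu (by simp [Fm.boundVars, h])
    have hfrB : ∀ p ∈ B.symsF, ∀ u, p.1 = some (Sum.inr u) → u ∉ B.boundVars :=
      fun p hp u hu h => hfr p (by simp [Fm.symsF, hp]) u hu (by simp [Fm.boundVars, h])
    obtain ⟨I₁, hd₁, htr₁⟩ := ihA b γs hN.1 hγA hfrA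
    obtain ⟨I₂, hd₂, htr₂⟩ := ihB b γs hN.2.1 hγB hfrB
    have hXA : ∀ p ∈ (A.step b γs).symsF, ∀ u, p.1 = some (Sum.inr u) →
        u ∉ B.boundVars ∨ u ∈ A.boundVars := by
      intro p hp u hu
      rcases Fm.symsF_step hN.1 p hp with h | ⟨x, hx1, hx2, _⟩
      · left
        intro hB
        exact hfr p (by simp [Fm.symsF, h]) u hu (by simp [Fm.boundVars, hB])
      · right
        have : u = x := by rw [hu] at hx1; simpa using hx1
        exact this ▸ hx2
    have hXB : ∀ p ∈ (B.step b γs).symsF, ∀ u, p.1 = some (Sum.inr u) →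
        u ∉ A.boundVars := by
      intro p hp u hu
      rcases Fm.symsF_step hN.2.1 p hp with h | ⟨x, hx1, hx2, _⟩
      · intro hA
        exact hfr p (by simp [Fm.symsF, h]) u hu (by simp [Fm.boundVars, hA])
      · have : u = x := by rw [hu] at hx1; simpa using hx1
        subst this
        exact fun hA => hN.2.2 _ hA _ hx2 rfl
    refine ⟨mergeI I₁ I₂ I A.boundVars, by simpa [Fm.boundVars] using diffOnly_mergeI hd₁ hd₂,
      fun w hw => ?_⟩
    constructor
    · rintro rfl h
      simp only [Fm.step_and, Fm.holds_and] at h ⊢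
      exact ⟨(htr₁ w hw).1 rfl ((mergeI_left hd₁ hd₂ hXA).1 h.1),
             (htr₂ w hw).1 rfl ((mergeI_right hd₁ hd₂ hXB).1 h.2)⟩
    · rintro rfl h
      simp only [Fm.step_and, Fm.holds_and] at h ⊢
      exact ⟨(mergeI_left hd₁ hd₂ hXA).2 ((htr₁ w hw).2 rfl h.1),
             (mergeI_right hd₁ hd₂ hXB).2 ((htr₂ w hw).2 rfl h.2)⟩
  | all x A ih =>
    intro b γs hN hγ hfr
    simp only [Fm.boundVars, List.nodup_cons] at hN
    have hγA : ∀ z ∈ γs, z ∉ A.boundVars := fun z hz h => hγ z hz (by simp [Fm.boundVars, h])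
    have hxγ : x ∉ γs := fun h => hγ x h (by simp [Fm.boundVars])
    cases b with
    | false =>
      have hfrA : ∀ p ∈ A.symsF, ∀ u, p.1 = some (Sum.inr u) → u ∉ A.boundVars :=
        fun p hp u hu h => hfr p (by simpa [Fm.symsF] using hp) u hu (by simp [Fm.boundVars, h])
      have hγ' : ∀ z ∈ γs ++ [x], z ∉ A.boundVars := by
        intro z hz
        rcases List.mem_append.1 hz with h | h
        · exact hγA z h
        · exact (show z = x by simpa using h) ▸ hN.1
      obtain ⟨I₁, hd₁, htr₁⟩ := ih false (γs ++ [x]) hN.2 hγ' hfrA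
      refine ⟨I₁, ⟨hd₁.1, fun s hs => ?_⟩, fun w hw => ?_⟩
      · obtain ⟨u, hu, hsu⟩ := hd₁.2 s hs
        exact ⟨u, by simp [Fm.boundVars, hu], hsu⟩
      constructor
      · rintro h; cases h
      · rintro _ h
        rw [Fm.step_all_false]
        intro d
        have hw' : ∀ z, z ∉ γs ++ [x] → Function.update w x d z = w z := by
          intro z hz
          rw [Function.update_apply, if_neg (by simp at hz; exact hz.2)]
        refine (htr₁ (Function.update w x d) ?_).2 rfl (h d)
        intro z hz
        rw [hw' z hz]
        exact hw z (fun hzz => hz (by simp [hzz]))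
    | true =>
      classical
      -- the counterexample choice function
      set e : List D → D := fun ds =>
        if h : ∃ d : D, ¬ A.holds I (Function.update (updL v γs ds) x d) then h.choose
        else Classical.arbitrary D with he
      set I' : Interp D := extI I x e with hI'
      have hdiff : DiffOnly I I' ((Fm.all x A).boundVars) := by
        refine ⟨extI_prd I x e, fun s hs => ?_⟩
        by_cases hsx : s = some (Sum.inr x)
        · exact ⟨x, by simp [Fm.boundVars], hsx⟩
        · exfalso
          apply hs
          rw [hI', extI_fns, Function.update_apply, if_neg hsx]
      have hIA : ∀ {u : ℕ → D}, A.holds I' u ↔ A.holds I u := by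
        intro u
        refine Fm.holds_ext (extI_prd I x e) ?_
        intro p hp
        rw [extI_fns, Function.update_apply, if_neg]
        intro hpx
        exact hfr p (by simpa [Fm.symsF] using hp) x hpx (by simp [Fm.boundVars])
      refine ⟨I', hdiff, fun w hw => ?_⟩
      constructor
      · rintro _ hst
        rw [Fm.step_all_true] at hst
        have hxA : x ∉ A.boundVars := hN.1
        have htA : ∀ z ∈ (skTm x γs).varsT, z ∉ A.boundVars := by
          intro z hz
          rw [skTm_varsT] at hz
          exact hγA z hz
        rw [Fm.holds_subst hxA htA] at hst
        have heval : Tm.eval I' w (skTm x γs) = e (γs.map w) := by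
          rw [skTm, Tm.eval_fn, hI', extI_fns, Function.update_self]
          congr 1
          rw [List.map_map]
          exact List.map_congr_left fun z _ => by simp
        rw [heval] at hst
        rw [hIA] at hst
        intro d
        by_contra hnd
        have hcond : ∃ d', ¬ A.holds I (Function.update (updL v γs (γs.map w)) x d') := by
          rw [updL_map v w γs hw]
          exact ⟨d, hnd⟩
        have hch : ¬ A.holds I (Function.update (updL v γs (γs.map w)) x (e (γs.map w))) := by
          rw [he]
          simp only [dif_pos hcond]
          exact hcond.choose_spec
        rw [updL_map v w γs hw] at hch
        exact hch hst
      · rintro h; cases h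
  | ex x A ih =>
    intro b γs hN hγ hfr
    simp only [Fm.boundVars, List.nodup_cons] at hN
    have hγA : ∀ z ∈ γs, z ∉ A.boundVars := fun z hz h => hγ z hz (by simp [Fm.boundVars, h])
    have hxγ : x ∉ γs := fun h => hγ x h (by simp [Fm.boundVars])
    cases b with
    | true =>
      have hfrA : ∀ p ∈ A.symsF, ∀ u, p.1 = some (Sum.inr u) → u ∉ A.boundVars :=
        fun p hp u hu h => hfr p (by simpa [Fm.symsF] using hp) u hu (by simp [Fm.boundVars, h])
      have hγ' : ∀ z ∈ γs ++ [x], z ∉ A.boundVars := by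
        intro z hz
        rcases List.mem_append.1 hz with h | h
        · exact hγA z h
        · exact (show z = x by simpa using h) ▸ hN.1
      obtain ⟨I₁, hd₁, htr₁⟩ := ih true (γs ++ [x]) hN.2 hγ' hfrA
      refine ⟨I₁, ⟨hd₁.1, fun s hs => ?_⟩, fun w hw => ?_⟩
      · obtain ⟨u, hu, hsu⟩ := hd₁.2 s hs
        exact ⟨u, by simp [Fm.boundVars, hu], hsu⟩
      constructor
      · rintro _ h
        rw [Fm.step_ex_true] at h
        obtain ⟨d, hd⟩ := h
        have hw' : ∀ z, z ∉ γs ++ [x] → Function.update w x d z = w z := by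
          intro z hz
          rw [Function.update_apply, if_neg (by simp at hz; exact hz.2)]
        refine ⟨d, (htr₁ (Function.update w x d) ?_).1 rfl hd⟩
        intro z hz
        rw [hw' z hz]
        exact hw z (fun hzz => hz (by simp [hzz]))
      · rintro h; cases h
    | false =>
      classical
      -- the witness choice function
      set e : List D → D := fun ds =>
        if h : ∃ d : D, A.holds I (Function.update (updL v γs ds) x d) then h.choose
        else Classical.arbitrary D with he
      set I' : Interp D := extI I x e with hI'
      have hdiff : DiffOnly I I' ((Fm.ex x A).boundVars) := by
        refine ⟨extI_prd I x e, fun s hs => ?_⟩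
        by_cases hsx : s = some (Sum.inr x)
        · exact ⟨x, by simp [Fm.boundVars], hsx⟩
        · exfalso
          apply hs
          rw [hI', extI_fns, Function.update_apply, if_neg hsx]
      have hIA : ∀ {u : ℕ → D}, A.holds I' u ↔ A.holds I u := by
        intro u
        refine Fm.holds_ext (extI_prd I x e) ?_
        intro p hp
        rw [extI_fns, Function.update_apply, if_neg]
        intro hpx
        exact hfr p (by simpa [Fm.symsF] using hp) x hpx (by simp [Fm.boundVars])
      refine ⟨I', hdiff, fun w hw => ?_⟩
      constructor
      · rintro h; cases h
      · rintro _ h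
        obtain ⟨d, hd⟩ := h
        rw [Fm.step_ex_false]
        have hxA : x ∉ A.boundVars := hN.1
        have htA : ∀ z ∈ (skTm x γs).varsT, z ∉ A.boundVars := by
          intro z hz
          rw [skTm_varsT] at hz
          exact hγA z hz
        rw [Fm.holds_subst hxA htA]
        have heval : Tm.eval I' w (skTm x γs) = e (γs.map w) := by
          rw [skTm, Tm.eval_fn, hI', extI_fns, Function.update_self]
          congr 1
          rw [List.map_map]
          exact List.map_congr_left fun z _ => by simp
        rw [heval, hIA]
        have hcond : ∃ d', A.holds I (Function.update (updL v γs (γs.map w)) x d') := by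
          rw [updL_map v w γs hw]
          exact ⟨d, hd⟩
        have hch : A.holds I (Function.update (updL v γs (γs.map w)) x (e (γs.map w))) := by
          rw [he]
          simp only [dif_pos hcond]
          exact hcond.choose_spec
        rw [updL_map v w γs hw] at hch
        exact hch

/-- Iterating `step` produces an interpretation of the Skolem symbols falsifying
the outer Skolemized form, from any structure falsifying the formula. -/
theorem steps_sound {D : Type} [Nonempty D] :
    ∀ (k : ℕ) (G : Fm) (I : Interp D) (v : ℕ → D), G.uDepth true ≤ k →
      G.boundVars.Nodup →
      (∀ z ∈ G.boundVars, z ∉ G.freeVars) →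
      (∀ p ∈ G.symsF, ∀ u, p.1 = some (Sum.inr u) → u ∉ G.boundVars) →
      ¬ G.holds I v → ∃ I' : Interp D, ¬ (G.skolemize true []).holds I' v := by
  intro k
  induction k with
  | zero =>
    intro G I v hdep hN _ _ hfail
    rw [Fm.skolemize_of_uDepth_zero [] (Nat.le_zero.1 hdep)]
    exact ⟨I, hfail⟩
  | succ k ih =>
    intro G I v hdep hN hbf hfr hfail
    obtain ⟨I₁, hd₁, htr₁⟩ := step_sound I v G true [] hN (by simp) hfr
    have hfail' : ¬ (G.step true []).holds I₁ v :=
      fun h => hfail ((htr₁ v (fun _ _ => rfl)).1 rfl h)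
    have hN' : (G.step true []).boundVars.Nodup := hN.sublist (Fm.boundVars_step true [] G)
    have hbf' : ∀ z ∈ (G.step true []).boundVars, z ∉ (G.step true []).freeVars := by
      intro z hz hzf
      rcases Fm.freeVars_step z hzf with h | h
      · exact hbf z ((Fm.boundVars_step true [] G).mem hz) h
      · simp at h
    have hfr' : ∀ p ∈ (G.step true []).symsF, ∀ u, p.1 = some (Sum.inr u) →
        u ∉ (G.step true []).boundVars := by
      intro p hp u hu
      rcases Fm.symsF_step hN p hp with h | ⟨x, hx1, hx2, hx3⟩
      · intro hub
        exact hfr p h u hu ((Fm.boundVars_step true [] G).mem hub)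
      · have : u = x := by rw [hu] at hx1; simpa using hx1
        exact this ▸ hx3
    obtain ⟨I', hI'⟩ := ih (G.step true []) I₁ v (Fm.uDepth_step [] hdep) hN' hbf' hfr' hfail'
    rw [Fm.skolemize_step hN (by simp)] at hI'
    exact ⟨I', hI'⟩

/-- Direction II of the main theorem: Property C of some positive order implies
validity. -/
theorem valid_of_hasC {A : Fm} (hrect : A.rectified) (hbase : A.isBase)
    {n : ℕ} (hC : A.hasC n) : A.valid := by
  intro D hD I v
  haveI : Nonempty D := hD
  by_contra hA
  have hfr : ∀ p ∈ A.symsF, ∀ u, p.1 = some (Sum.inr u) → u ∉ A.boundVars := by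
    intro p hp u hu
    obtain ⟨k, hk⟩ := hbase p hp
    rw [hk] at hu
    cases hu
  obtain ⟨I', hF⟩ := steps_sound (A.uDepth true) A I v le_rfl hrect.1 hrect.2 hfr hA
  rw [Fm.hasC] at hC
  by_cases h1 : n = 1
  · rw [if_pos h1] at hC
    exact hF (Fm.taut_holds hC _ _)
  · rw [if_neg h1] at hC
    have hexp := Fm.taut_holds hC I' v
    exact hF ((Fm.holds_expandL true (Fm.exOnly_skolemize A true []) v).1 rfl hexp)



/-- **The Löwenheim–Skolem theorem in Herbrand's formulation.**
A first-order formula `A` is valid iff it has Property C of some positive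
order `n`. -/
theorem loewenheim_skolem (A : Fm) (hrect : A.rectified) (hbase : A.isBase) :
    A.valid ↔ ∃ n : ℕ, 0 < n ∧ A.hasC n := by
  constructor
  · exact hasC_of_valid hrect
  · rintro ⟨n, _, hC⟩
    exact valid_of_hasC hrect hbase hC

end Herbrand
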